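/- Let k be an even positive integer and let G be a finite (s,k)-edge-connected graph in which deg(s) is even. Then the lifting graph L(G, s, k) is a complete multipartite graph; in particular its complement is disconnected (provided deg(s) ≥ 2). -/

import Mathlib

universe u v

/-- A loopless multigraph on vertex type `V` with edge type `E`:
each edge `e` has two distinct endpoints `fst e` and `snd e`. -/
structure Multigraph (V : Type u) (E : Type v) where
  fst : E → V
  snd : E → V
  loopless : ∀ e, fst e ≠ snd e

namespace Multigraph

variable {V : Type u} {E : Type v}

/-- The edge `e` has endpoints `a` and `b`. -/
def Inc (G : Multigraph V E) (e : E) (a b : V) : Prop :=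
  (G.fst e = a ∧ G.snd e = b) ∨ (G.fst e = b ∧ G.snd e = a)

/-- The edge `e` is incident with the vertex `s`. -/
def IncVert (G : Multigraph V E) (s : V) (e : E) : Prop :=
  G.fst e = s ∨ G.snd e = s

/-- The degree of a vertex: the number of edges incident with it. -/
noncomputable def degree (G : Multigraph V E) (s : V) : ℕ :=
  {e : E | G.IncVert s e}.ncard

/-- A graph is locally finite if every vertex is incident with only finitely many edges. -/
def LocallyFinite (G : Multigraph V E) : Prop :=
  ∀ s : V, {e : E | G.IncVert s e}.Finite

/-- `δ(S)`: the set of edges with exactly one endpoint in `S`. -/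
def edgeCut (G : Multigraph V E) (S : Set V) : Set E :=
  {e : E | (G.fst e ∈ S ∧ G.snd e ∉ S) ∨ (G.fst e ∉ S ∧ G.snd e ∈ S)}

open Classical in
/-- The endpoint of `e` other than `s` (for `e` incident with `s`). -/
noncomputable def other (G : Multigraph V E) (s : V) (e : E) : V :=
  if G.fst e = s then G.snd e else G.fst e

open Classical in
/-- For an edge of `δ(S)`, its endpoint outside `S`. -/
noncomputable def outEnd (G : Multigraph V E) (S : Set V) (e : E) : V :=
  if G.fst e ∈ S then G.snd e else G.fst e

/-- Walks in a multigraph. -/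
inductive Walk (G : Multigraph V E) : V → V → Type (max u v)
  | nil (x : V) : Walk G x x
  | cons {x y z : V} (e : E) (h : G.Inc e x y) (p : Walk G y z) : Walk G x z

namespace Walk

variable {G : Multigraph V E}

/-- The list of edges used by a walk. -/
def edges : ∀ {x y : V}, G.Walk x y → List E
  | _, _, .nil _ => []
  | _, _, .cons e _ p => e :: edges p

/-- The list of vertices visited by a walk. -/
def support : ∀ {x y : V}, G.Walk x y → List V
  | _, y, .nil _ => [y]
  | x, _, .cons _ _ p => x :: support p

/-- A walk is a path if it has no repeated vertices. -/
def IsPath {x y : V} (p : G.Walk x y) : Prop := p.support.Nodup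

end Walk

/-- There are `k` pairwise edge-disjoint paths from `x` to `y`. -/
def EdgeDisjointPaths (G : Multigraph V E) (k : ℕ) (x y : V) : Prop :=
  ∃ P : Fin k → G.Walk x y,
    (∀ i, (P i).IsPath) ∧ ∀ i j, i ≠ j → List.Disjoint (P i).edges (P j).edges

/-- `G` is `k`-edge-connected: between any two distinct vertices there are `k`
pairwise edge-disjoint paths. -/
def EdgeConnected (G : Multigraph V E) (k : ℕ) : Prop :=
  ∀ x y : V, x ≠ y → G.EdgeDisjointPaths k x y

/-- `G` is `(s,k)`-edge-connected: between any two distinct vertices different from `s`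
there are `k` pairwise edge-disjoint paths (possibly through `s`). -/
def SEdgeConnected (G : Multigraph V E) (s : V) (k : ℕ) : Prop :=
  ∀ x y : V, x ≠ s → y ≠ s → x ≠ y → G.EdgeDisjointPaths k x y

/-- An orientation of `G` assigns to each edge a tail and a head (its two endpoints). -/
structure Orientation (G : Multigraph V E) where
  tail : E → V
  head : E → V
  inc : ∀ e, G.Inc e (tail e) (head e)

namespace Orientation

variable {G : Multigraph V E}

/-- Directed walks with respect to an orientation. -/
inductive DiWalk (o : G.Orientation) : V → V → Type (max u v)
  | nil (x : V) : DiWalk o x x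
  | cons {x y z : V} (e : E) (ht : o.tail e = x) (hh : o.head e = y) (p : DiWalk o y z) :
      DiWalk o x z

namespace DiWalk

variable {o : G.Orientation}

/-- The list of arcs used by a directed walk. -/
def edges : ∀ {x y : V}, o.DiWalk x y → List E
  | _, _, .nil _ => []
  | _, _, .cons e _ _ p => e :: edges p

/-- The list of vertices visited by a directed walk. -/
def support : ∀ {x y : V}, o.DiWalk x y → List V
  | _, y, .nil _ => [y]
  | x, _, .cons _ _ _ p => x :: support p

/-- A directed walk is a directed path if it has no repeated vertices. -/
def IsPath {x y : V} (p : o.DiWalk x y) : Prop := p.support.Nodup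

end DiWalk

/-- An orientation is `k`-arc-connected if from any vertex to any other there are `k`
pairwise arc-disjoint directed paths. -/
def ArcConnected (o : G.Orientation) (k : ℕ) : Prop :=
  ∀ x y : V, ∃ P : Fin k → o.DiWalk x y,
    (∀ i, (P i).IsPath) ∧ ∀ i j, i ≠ j → List.Disjoint (P i).edges (P j).edges

end Orientation

/-- A ray: a one-way infinite path. -/
structure Ray (G : Multigraph V E) where
  vert : ℕ → V
  edge : ℕ → E
  inc : ∀ n, G.Inc (edge n) (vert n) (vert (n + 1))
  inj : Function.Injective vert

/-- Two rays are edge-disjoint. -/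
def Ray.EdgeDisjoint {G : Multigraph V E} (R R' : G.Ray) : Prop :=
  ∀ m n, R.edge m ≠ R'.edge n

/-- A walk is edge-disjoint from a ray. -/
def Walk.EdgeDisjointRay {G : Multigraph V E} {x y : V} (p : G.Walk x y) (R : G.Ray) : Prop :=
  ∀ e ∈ p.edges, ∀ n, R.edge n ≠ e

/-- Two rays are equivalent (belong to the same end) if there are infinitely many
pairwise vertex-disjoint paths between them. -/
def RayEquiv (G : Multigraph V E) (R R' : G.Ray) : Prop :=
  ∃ P : ℕ → (Σ (m n : ℕ), G.Walk (R.vert m) (R'.vert n)),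
    (∀ i, (P i).2.2.IsPath) ∧
      ∀ i j, i ≠ j → List.Disjoint (P i).2.2.support (P j).2.2.support

/-- A graph is one-ended if it has a ray and any two rays are equivalent. -/
def OneEnded (G : Multigraph V E) : Prop :=
  Nonempty G.Ray ∧ ∀ R R' : G.Ray, G.RayEquiv R R'

end Multigraph
/-- A multigraph on the vertex type `W`, with its edge type bundled. -/
structure GraphOn (W : Type u) : Type (u + 1) where
  E : Type u
  graph : Multigraph W E

namespace Multigraph

variable {W F : Type u}

/-- The graph obtained from `G` by lifting the pair of edges `e₁, e₂` at `s`: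
delete `e₁` and `e₂`, and add an edge between their non-`s` endpoints if these differ
(nothing is added if they coincide). -/
noncomputable def lift (G : Multigraph W F) (s : W) (e₁ e₂ : F) : GraphOn W where
  E := {e : F // e ≠ e₁ ∧ e ≠ e₂} ⊕ {_p : PUnit.{u + 1} // G.other s e₁ ≠ G.other s e₂}
  graph :=
    { fst := Sum.elim (fun e => G.fst e.1) fun _ => G.other s e₁
      snd := Sum.elim (fun e => G.snd e.1) fun _ => G.other s e₂
      loopless := by
        rintro (e | p)
        · exact G.loopless e.1
        · exact p.2 }

/-- The pair of edges `e₁, e₂` incident with `s` is `k`-liftable: after lifting it,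
there are `k` pairwise edge-disjoint paths between any two vertices different from `s`. -/
def IsLiftable (G : Multigraph W F) (s : W) (k : ℕ) (e₁ e₂ : F) : Prop :=
  e₁ ≠ e₂ ∧ G.IncVert s e₁ ∧ G.IncVert s e₂ ∧ (G.lift s e₁ e₂).graph.SEdgeConnected s k

/-- The `k`-lifting graph `L(G, s, k)`: vertices are the edges of `G` incident with `s`,
two being adjacent iff they form a `k`-liftable pair. -/
noncomputable def liftingGraph (G : Multigraph W F) (s : W) (k : ℕ) :
    SimpleGraph {e : F // G.IncVert s e} :=
  SimpleGraph.fromRel fun e f => G.IsLiftable s k e.1 f.1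

end Multigraph

/-- `x` is an isolated vertex of the simple graph `L`. -/
def SimpleGraph.IsIsolatedVertex {α : Type*} (L : SimpleGraph α) (x : α) : Prop :=
  ∀ y, ¬ L.Adj x y

/-- `L` is the union of an isolated vertex and a balanced complete bipartite graph. -/
def SimpleGraph.IsIsolatedPlusBalancedCompleteBipartite {α : Type*} (L : SimpleGraph α) : Prop :=
  ∃ (x : α) (A B : Set α),
    x ∉ A ∧ x ∉ B ∧ A ∩ B = ∅ ∧ A ∪ B = {x}ᶜ ∧ A.ncard = B.ncard ∧
      ∀ a b, L.Adj a b ↔ (a ∈ A ∧ b ∈ B) ∨ (a ∈ B ∧ b ∈ A)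

/-! ### Auxiliary development -/

open Classical

namespace Multigraph

variable {V : Type u} {E : Type v} {G : Multigraph V E}

lemma other_ne {s : V} {e : E} (h : G.IncVert s e) : G.other s e ≠ s := by
  classical
  unfold other
  rcases h with h1 | h2
  · simp [h1]
    intro hsnd
    exact G.loopless e (h1.trans hsnd.symm)
  · by_cases hf : G.fst e = s
    · simp [hf]
      intro hsnd
      exact G.loopless e (hf.trans hsnd.symm)
    · simpa [hf] using hf

lemma inc_s_other {s : V} {e : E} (h : G.IncVert s e) : G.Inc e s (G.other s e) := by
  classical
  unfold other
  rcases h with h1 | h2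
  · left; simp [h1]
  · by_cases hf : G.fst e = s
    · left; simp [hf]
    · right; simp [h2, hf]

lemma mem_edgeCut_of_inc {S : Set V} {e : E} {a b : V} (h : G.Inc e a b)
    (ha : a ∈ S) (hb : b ∉ S) : e ∈ G.edgeCut S := by
  rcases h with ⟨h1, h2⟩ | ⟨h1, h2⟩
  · exact Or.inl ⟨h1 ▸ ha, h2 ▸ hb⟩
  · exact Or.inr ⟨h1 ▸ hb, h2 ▸ ha⟩

namespace Walk

lemma exists_crossing_edge {S : Set V} : ∀ {x y : V} (w : G.Walk x y),
    x ∈ S → y ∉ S → ∃ e ∈ w.edges, e ∈ G.edgeCut S := by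
  intro x y w
  induction w with
  | nil z => intro hx hy; exact absurd hx hy
  | cons e h p ih =>
    intro hx hy
    rename_i a b c
    by_cases hb : b ∈ S
    · obtain ⟨e', he', hc⟩ := ih hb hy
      exact ⟨e', List.mem_cons_of_mem _ he', hc⟩
    · exact ⟨e, List.mem_cons_self, mem_edgeCut_of_inc h hx hb⟩

lemma exists_suffix_walk {a b : V} (p : G.Walk a b) (x : V) (hx : x ∈ p.support) :
    ∃ q : G.Walk x b, q.support.IsSuffix p.support ∧ ∀ e ∈ q.edges, e ∈ p.edges := by
  induction p with
  | nil z =>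
    simp only [support, List.mem_singleton] at hx
    subst hx
    exact ⟨Walk.nil x, List.suffix_refl _, by simp [edges]⟩
  | cons e h r ih =>
    rename_i u m c
    simp only [support, List.mem_cons] at hx
    by_cases heq : x = u
    · subst heq
      exact ⟨Walk.cons e h r, List.suffix_refl _, fun e' he' => he'⟩
    · have hx' : x ∈ r.support := by
        rcases hx with h1 | h2
        · exact absurd h1 heq
        · exact h2
      obtain ⟨q, hs, he⟩ := ih hx'
      refine ⟨q, hs.trans ?_, fun e' he' => List.mem_cons_of_mem _ (he e' he')⟩
      exact ⟨[u], rfl⟩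

lemma exists_isPath {x y : V} (w : G.Walk x y) :
    ∃ p : G.Walk x y, p.IsPath ∧ ∀ e ∈ p.edges, e ∈ w.edges := by
  induction w with
  | nil z => exact ⟨Walk.nil z, by simp [IsPath, support], by simp⟩
  | cons e h r ih =>
    rename_i u m c
    obtain ⟨p', hp', hep'⟩ := ih
    by_cases hx : u ∈ p'.support
    · obtain ⟨q, hs, he⟩ := exists_suffix_walk p' u hx
      refine ⟨q, ?_, fun e' he' => List.mem_cons_of_mem _ (hep' e' (he e' he'))⟩
      exact hp'.sublist hs.sublist
    · refine ⟨Walk.cons e h p', ?_, ?_⟩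
      · simpa [IsPath, support, List.nodup_cons] using ⟨hx, hp'⟩
      · intro e' he'
        rcases List.mem_cons.1 he' with h1 | h2
        · subst h1; exact List.mem_cons_self
        · exact List.mem_cons_of_mem _ (hep' e' h2)

end Walk

lemma EdgeDisjointPaths.le_ncard [Finite E] {k : ℕ} {x y : V}
    (h : G.EdgeDisjointPaths k x y) {S : Set V} (hx : x ∈ S) (hy : y ∉ S) :
    k ≤ (G.edgeCut S).ncard := by
  obtain ⟨P, hP, hD⟩ := h
  have hcr : ∀ i, ∃ e ∈ (P i).edges, e ∈ G.edgeCut S :=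
    fun i => Walk.exists_crossing_edge (P i) hx hy
  choose c hc1 hc2 using hcr
  have hinj : Function.Injective c := by
    intro i j hij
    by_contra hne
    exact hD i j hne (hij ▸ hc1 i) (hc1 j)
  calc k = (Set.univ : Set (Fin k)).ncard := by simp [Set.ncard_univ]
    _ = (c '' Set.univ).ncard := (Set.ncard_image_of_injective _ hinj).symm
    _ ≤ (G.edgeCut S).ncard := by
        apply Set.ncard_le_ncard _ (Set.toFinite _)
        rintro _ ⟨i, -, rfl⟩
        exact hc2 i

lemma SEdgeConnected.cut_lb [Finite E] {s : V} {k : ℕ} (hconn : G.SEdgeConnected s k)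
    {T : Set V} {a b : V} (haT : a ∈ T) (hbT : b ∉ T) (has : a ≠ s) (hbs : b ≠ s) :
    k ≤ (G.edgeCut T).ncard := by
  have hab : a ≠ b := fun h => hbT (h ▸ haT)
  exact (hconn a b has hbs hab).le_ncard haT hbT

end Multigraph

/-! ### Flows and Menger's theorem (edge version) -/

namespace Multigraph

variable {V : Type u} {E : Type v} {G : Multigraph V E}

noncomputable def dirz (G : Multigraph V E) (e : E) (v : V) : ℤ :=
  (if G.fst e = v then 1 else 0) - (if G.snd e = v then 1 else 0)

noncomputable def divz (G : Multigraph V E) [Fintype E] (f : E → ℤ) (v : V) : ℤ :=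
  ∑ e, G.dirz e v * f e

def IsUnit' (f : E → ℤ) : Prop := ∀ e, f e = 0 ∨ f e = 1 ∨ f e = -1

lemma ncard_eq_card_filter [Fintype E] (s : Set E) :
    s.ncard = (Finset.univ.filter (· ∈ s)).card := by
  classical
  rw [Set.ncard_eq_toFinset_card']
  congr 1
  ext e
  simp

section FlowBasics

variable [Fintype E]

lemma dirz_eq_zero {e : E} {v : V} (h1 : G.fst e ≠ v) (h2 : G.snd e ≠ v) :
    G.dirz e v = 0 := by simp [dirz, h1, h2]

lemma divz_update (f : E → ℤ) (e : E) (a : ℤ) (v : V) :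
    G.divz (Function.update f e a) v = G.divz f v + G.dirz e v * (a - f e) := by
  classical
  unfold divz
  have h : ∀ e' : E, G.dirz e' v * Function.update f e a e'
      = G.dirz e' v * f e' + (if e' = e then G.dirz e v * (a - f e) else 0) := by
    intro e'
    by_cases he : e' = e
    · subst he; simp [Function.update_self]; ring
    · simp [Function.update_of_ne he, he]
  rw [Finset.sum_congr rfl (fun e' _ => h e'), Finset.sum_add_distrib]
  congr 1
  simp

lemma divz_sum_over (f : E → ℤ) (S : Set V) [Fintype V] :
    ∑ v ∈ Finset.univ.filter (· ∈ S), G.divz f v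
      = ∑ e, ((if G.fst e ∈ S then 1 else 0) - (if G.snd e ∈ S then (1:ℤ) else 0)) * f e := by
  classical
  unfold divz
  rw [Finset.sum_comm]
  refine Finset.sum_congr rfl (fun e _ => ?_)
  rw [← Finset.sum_mul]
  congr 1
  unfold dirz
  rw [Finset.sum_sub_distrib]
  congr 1
  · rw [Finset.sum_ite_eq (Finset.univ.filter (· ∈ S)) (G.fst e) (fun _ => (1:ℤ))]
    simp
  · rw [Finset.sum_ite_eq (Finset.univ.filter (· ∈ S)) (G.snd e) (fun _ => (1:ℤ))]
    simp

/-- If `f` is conserved on `S` except at `x ∈ S`, then `div f x` equals the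
sum over the edge cut of `S` of the signed flow values. -/
lemma divz_eq_cut_sum (f : E → ℤ) (S : Set V) [Fintype V] {x : V} (hx : x ∈ S)
    (hcons : ∀ v ∈ S, v ≠ x → G.divz f v = 0) :
    G.divz f x = ∑ e, ((if G.fst e ∈ S then 1 else 0) - (if G.snd e ∈ S then (1:ℤ) else 0)) * f e := by
  classical
  rw [← G.divz_sum_over f S]
  rw [Finset.sum_eq_single x]
  · intro v hv hvx
    exact hcons v (by simpa using hv) hvx
  · intro hxmem
    exact absurd (by simpa using hx) hxmem

lemma cut_coeff_eq_zero {S : Set V} {e : E} (h : e ∉ G.edgeCut S) :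
    ((if G.fst e ∈ S then 1 else 0) - (if G.snd e ∈ S then (1:ℤ) else 0)) = 0 := by
  unfold edgeCut at h
  by_cases h1 : G.fst e ∈ S <;> by_cases h2 : G.snd e ∈ S <;> simp_all

/-- value of a flow is at most the size of any cut -/
lemma divz_le_cut (f : E → ℤ) (hf : IsUnit' f) (S : Set V) [Fintype V] {x : V} (hx : x ∈ S)
    (hcons : ∀ v ∈ S, v ≠ x → G.divz f v = 0) :
    G.divz f x ≤ ((G.edgeCut S).ncard : ℤ) := by
  classical
  rw [G.divz_eq_cut_sum f S hx hcons, ncard_eq_card_filter]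
  calc ∑ e, ((if G.fst e ∈ S then 1 else 0) - (if G.snd e ∈ S then (1:ℤ) else 0)) * f e
      ≤ ∑ e, (if e ∈ G.edgeCut S then (1:ℤ) else 0) := by
        refine Finset.sum_le_sum (fun e _ => ?_)
        by_cases hc : e ∈ G.edgeCut S
        · simp only [hc, if_true]
          rcases hf e with h | h | h <;>
            (by_cases h1 : G.fst e ∈ S <;> by_cases h2 : G.snd e ∈ S <;> simp [h, h1, h2])
        · rw [G.cut_coeff_eq_zero hc]
          simp [hc]
    _ = ((Finset.univ.filter (· ∈ G.edgeCut S)).card : ℤ) := by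
        rw [Finset.sum_boole]

/-- the saturated version : if every cut edge carries a full unit outward,
the value equals the cut size. -/
lemma divz_eq_cut (f : E → ℤ) (S : Set V) [Fintype V] {x : V} (hx : x ∈ S)
    (hcons : ∀ v ∈ S, v ≠ x → G.divz f v = 0)
    (hsat : ∀ e ∈ G.edgeCut S,
      ((if G.fst e ∈ S then 1 else 0) - (if G.snd e ∈ S then (1:ℤ) else 0)) * f e = 1) :
    G.divz f x = ((G.edgeCut S).ncard : ℤ) := by
  classical
  rw [G.divz_eq_cut_sum f S hx hcons, ncard_eq_card_filter]
  have : ∀ e : E, ((if G.fst e ∈ S then 1 else 0) - (if G.snd e ∈ S then (1:ℤ) else 0)) * f e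
      = (if e ∈ G.edgeCut S then (1:ℤ) else 0) := by
    intro e
    by_cases hc : e ∈ G.edgeCut S
    · simp [hc, hsat e hc]
    · rw [G.cut_coeff_eq_zero hc]
      simp [hc]
  rw [Finset.sum_congr rfl (fun e _ => this e)]
  rw [Finset.sum_boole]

end FlowBasics

end Multigraph

/-! ### Residual steps, augmenting chains -/

namespace Multigraph

variable {V : Type u} {E : Type v} {G : Multigraph V E}

/-- residual step: one more unit can be pushed from `u` to `v`. -/
def stepz (G : Multigraph V E) (f : E → ℤ) (u v : V) : Prop :=
  ∃ e, (G.fst e = u ∧ G.snd e = v ∧ f e ≤ 0) ∨ (G.fst e = v ∧ G.snd e = u ∧ 0 ≤ f e)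

section Reach

variable [Fintype V] [Fintype E]

/-- If the current value is less than every cut, then `y` is reachable in the
residual graph. -/
lemma reach_of_value_lt {f : E → ℤ} (hf : IsUnit' f) {x y : V} {k : ℕ}
    (hcons : ∀ v, v ≠ x → v ≠ y → G.divz f v = 0)
    (hcut : ∀ S : Set V, x ∈ S → y ∉ S → (k : ℤ) ≤ (G.edgeCut S).ncard)
    (hval : G.divz f x < k) :
    Relation.ReflTransGen (G.stepz f) x y := by
  classical
  by_contra hy
  set S : Set V := {v | Relation.ReflTransGen (G.stepz f) x v} with hS
  have hxS : x ∈ S := Relation.ReflTransGen.refl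
  have hyS : y ∉ S := hy
  have hclosed : ∀ u ∈ S, ∀ v, G.stepz f u v → v ∈ S := by
    intro u hu v huv
    exact Relation.ReflTransGen.tail hu huv
  have hsat : ∀ e ∈ G.edgeCut S,
      ((if G.fst e ∈ S then 1 else 0) - (if G.snd e ∈ S then (1:ℤ) else 0)) * f e = 1 := by
    intro e he
    rcases he with ⟨h1, h2⟩ | ⟨h1, h2⟩
    · have hst : ¬ G.stepz f (G.fst e) (G.snd e) := fun hst => h2 (hclosed _ h1 _ hst)
      have hfe : ¬ (f e ≤ 0) := fun hle => hst ⟨e, Or.inl ⟨rfl, rfl, hle⟩⟩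
      have : f e = 1 := by rcases hf e with h | h | h <;> omega
      simp [h1, h2, this]
    · have hst : ¬ G.stepz f (G.snd e) (G.fst e) := fun hst => h1 (hclosed _ h2 _ hst)
      have hfe : ¬ (0 ≤ f e) := fun hle => hst ⟨e, Or.inr ⟨rfl, rfl, hle⟩⟩
      have : f e = -1 := by rcases hf e with h | h | h <;> omega
      simp [h1, h2, this]
  have heq := G.divz_eq_cut f S hxS (fun v hv hvx => hcons v hvx (fun h => hyS (h ▸ hv))) hsat
  rw [heq] at hval
  exact absurd (hcut S hxS hyS) (by omega)

end Reach

/-! ### Chains with no repeated vertices -/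

section Chains

variable {α : Type*} {r r' : α → α → Prop}

lemma chain_cons' {β : Type*} {R : β → β → Prop} {a b : β} {l : List β} :
    List.Chain R a (b :: l) ↔ R a b ∧ List.Chain R b l := List.chain_cons

lemma chain_mono_mem : ∀ (l : List α) (a : α), List.Chain r a l →
    (∀ p q, p ∈ a :: l → q ∈ a :: l → r p q → r' p q) → List.Chain r' a l := by
  intro l
  induction l with
  | nil => intro a _ _; exact List.Chain.nil
  | cons b t ih =>
    intro a hc hmono
    rw [chain_cons'] at hc ⊢
    refine ⟨hmono a b (by simp) (by simp) hc.1, ih b hc.2 (fun p q hp hq => hmono p q ?_ ?_)⟩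
    · exact List.mem_cons_of_mem _ hp
    · exact List.mem_cons_of_mem _ hq

lemma chain_append_last : ∀ (m : List α) (a b c : α),
    List.Chain r a (m ++ [b]) → r b c → List.Chain r a (m ++ [b] ++ [c]) := by
  intro m
  induction m with
  | nil =>
    intro a b c hc hr
    simp only [List.nil_append] at hc ⊢
    rw [chain_cons'] at hc
    exact chain_cons'.2 ⟨hc.1, chain_cons'.2 ⟨hr, List.Chain.nil⟩⟩
  | cons d t ih =>
    intro a b c hc hr
    simp only [List.cons_append] at hc ⊢
    rw [chain_cons'] at hc
    exact chain_cons'.2 ⟨hc.1, ih d b c hc.2 hr⟩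

lemma chain_cut {c : α} : ∀ (l : List α) (a : α), List.Chain r a l → c ∈ a :: l →
    c = a ∨ ∃ m, List.Chain r a (m ++ [c]) ∧ (a :: (m ++ [c])).IsPrefix (a :: l) := by
  intro l
  induction l with
  | nil =>
    intro a _ hc
    simp only [List.mem_singleton] at hc
    exact Or.inl hc
  | cons b t ih =>
    intro a hc hmem
    rw [chain_cons'] at hc
    by_cases hca : c = a
    · exact Or.inl hca
    · have hmem' : c ∈ b :: t := by
        rcases List.mem_cons.1 hmem with h | h
        · exact absurd h hca
        · exact h
      rcases ih b hc.2 hmem' with h | ⟨m, hcm, hpre⟩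
      · subst h
        refine Or.inr ⟨[], ?_, ?_⟩
        · simpa using chain_cons'.2 ⟨hc.1, List.Chain.nil⟩
        · simpa using (List.prefix_cons_inj a).2 ((c :: t).prefix_iff_eq_take.2 (by simp))
      · refine Or.inr ⟨b :: m, chain_cons'.2 ⟨hc.1, hcm⟩, ?_⟩
        exact (List.prefix_cons_inj a).2 hpre

lemma rtg_nodup_chain {x y : α} (h : Relation.ReflTransGen r x y) :
    x = y ∨ ∃ m, List.Chain r x (m ++ [y]) ∧ (x :: (m ++ [y])).Nodup := by
  induction h with
  | refl => exact Or.inl rfl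
  | @tail b c hxb hbc ih =>
    rcases ih with rfl | ⟨m, hchain, hnodup⟩
    · by_cases hcx : c = x
      · exact Or.inl hcx.symm
      · refine Or.inr ⟨[], by simpa using chain_cons'.2 ⟨hbc, List.Chain.nil⟩, by simp [hcx, Ne.symm hcx]⟩
    · by_cases hmem : c ∈ x :: (m ++ [b])
      · rcases chain_cut (m ++ [b]) x hchain hmem with h | ⟨m2, hc2, hpre⟩
        · exact Or.inl h.symm
        · exact Or.inr ⟨m2, hc2, hnodup.sublist hpre.sublist⟩
      · refine Or.inr ⟨m ++ [b], chain_append_last m x b c hchain hbc, ?_⟩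
        have : (x :: (m ++ [b] ++ [c])) = (x :: (m ++ [b])) ++ [c] := by simp
        rw [this, List.nodup_append]
        refine ⟨hnodup, List.nodup_singleton c, ?_⟩
        intro p hp
        simp only [List.mem_singleton, forall_eq, forall_eq']
        intro hpc
        exact hmem (hpc ▸ hp)

end Chains

end Multigraph

/-! ### Augmentation -/

namespace Multigraph

variable {V : Type u} {E : Type v} {G : Multigraph V E}

section Augment

variable [Fintype V] [Fintype E]

lemma step_update {f : E → ℤ} {u v : V} (hf : IsUnit' f) (h : G.stepz f u v) (huv : u ≠ v) :
    ∃ f', IsUnit' f' ∧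
      (∃ e, ((G.fst e = u ∧ G.snd e = v) ∨ (G.fst e = v ∧ G.snd e = u)) ∧
        ∀ e', e' ≠ e → f' e' = f e') ∧
      G.divz f' u = G.divz f u + 1 ∧ G.divz f' v = G.divz f v - 1 ∧
      ∀ z, z ≠ u → z ≠ v → G.divz f' z = G.divz f z := by
  classical
  obtain ⟨e, hcase⟩ := h
  rcases hcase with ⟨h1, h2, h3⟩ | ⟨h1, h2, h3⟩
  · refine ⟨Function.update f e (f e + 1), ?_, ⟨e, Or.inl ⟨h1, h2⟩,
      fun e' he' => Function.update_of_ne he' _ _⟩, ?_, ?_, ?_⟩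
    · intro e'
      by_cases he : e' = e
      · subst he
        rcases hf e' with h | h | h <;> simp [Function.update_self, h] <;> omega
      · rw [Function.update_of_ne he]; exact hf e'
    · rw [G.divz_update]
      have : G.dirz e u = 1 := by simp [dirz, h1, h2, Ne.symm huv, h1 ▸ h2 ▸ huv]
      rw [this]; ring
    · rw [G.divz_update]
      have hfst : G.fst e ≠ v := h1 ▸ huv
      have : G.dirz e v = -1 := by simp [dirz, h2, hfst]
      rw [this]; ring
    · intro z hzu hzv
      rw [G.divz_update]
      rw [G.dirz_eq_zero (h1 ▸ Ne.symm hzu) (h2 ▸ Ne.symm hzv)]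
      ring
  · refine ⟨Function.update f e (f e - 1), ?_, ⟨e, Or.inr ⟨h1, h2⟩,
      fun e' he' => Function.update_of_ne he' _ _⟩, ?_, ?_, ?_⟩
    · intro e'
      by_cases he : e' = e
      · subst he
        rcases hf e' with h | h | h <;> simp [Function.update_self, h] <;> omega
      · rw [Function.update_of_ne he]; exact hf e'
    · rw [G.divz_update]
      have hfst : G.fst e ≠ u := h1 ▸ Ne.symm huv
      have : G.dirz e u = -1 := by simp [dirz, h2, hfst]
      rw [this]; ring
    · rw [G.divz_update]
      have hsnd : G.snd e ≠ v := by rw [h2]; exact huv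
      have : G.dirz e v = 1 := by simp [dirz, h1, hsnd]
      rw [this]; ring
    · intro z hzu hzv
      rw [G.divz_update]
      rw [G.dirz_eq_zero (h1 ▸ Ne.symm hzv) (h2 ▸ Ne.symm hzu)]
      ring

lemma augment {y : V} : ∀ (m : List V) (u : V) (f : E → ℤ), IsUnit' f →
    List.Chain (G.stepz f) u (m ++ [y]) → (u :: (m ++ [y])).Nodup →
    ∃ f', IsUnit' f' ∧ G.divz f' u = G.divz f u + 1 ∧ G.divz f' y = G.divz f y - 1 ∧
      ∀ v, v ≠ u → v ≠ y → G.divz f' v = G.divz f v := by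
  intro m
  induction m with
  | nil =>
    intro u f hf hchain hnodup
    simp only [List.nil_append] at hchain hnodup
    rw [chain_cons'] at hchain
    have huy : u ≠ y := by
      intro h; subst h; simp at hnodup
    obtain ⟨f', hf', _, h1, h2, h3⟩ := G.step_update hf hchain.1 huy
    exact ⟨f', hf', h1, h2, h3⟩
  | cons w m' ih =>
    intro u f hf hchain hnodup
    simp only [List.cons_append] at hchain hnodup
    rw [chain_cons'] at hchain
    have hnd' : (w :: (m' ++ [y])).Nodup := hnodup.of_cons
    have humem : u ∉ w :: (m' ++ [y]) := (List.nodup_cons.1 hnodup).1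
    have huw : u ≠ w := fun h => humem (h ▸ List.mem_cons_self)
    obtain ⟨f1, hf1, ⟨e, hends, hoff⟩, hdu, hdw, hdz⟩ := G.step_update hf hchain.1 huw
    have hchain1 : List.Chain (G.stepz f1) w (m' ++ [y]) := by
      refine chain_mono_mem _ _ hchain.2 (fun p q hp hq hpq => ?_)
      obtain ⟨e'', hcase⟩ := hpq
      have hee : e'' ≠ e := by
        intro h
        subst h
        rcases hcase with ⟨a1, a2, _⟩ | ⟨a1, a2, _⟩ <;> rcases hends with ⟨b1, b2⟩ | ⟨b1, b2⟩
        · exact humem ((a1.symm.trans b1) ▸ hp)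
        · exact humem ((a2.symm.trans b2) ▸ hq)
        · exact humem ((a1.symm.trans b1) ▸ hq)
        · exact humem ((a2.symm.trans b2) ▸ hp)
      exact ⟨e'', by rwa [hoff e'' hee]⟩
    obtain ⟨f2, hf2, h2w, h2y, h2z⟩ := ih w f1 hf1 hchain1 hnd'
    have hyu : y ≠ u := by
      intro h; exact humem (h ▸ (by simp : y ∈ w :: (m' ++ [y])))
    have hyw : y ≠ w := by
      intro h
      have := (List.nodup_cons.1 hnd').1
      exact this (h ▸ (by simp : y ∈ m' ++ [y]))
    refine ⟨f2, hf2, ?_, ?_, ?_⟩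
    · rw [h2z u huw (Ne.symm hyu), hdu]
    · rw [h2y, hdz y hyu hyw]
    · intro v hvu hvy
      by_cases hvw : v = w
      · subst hvw
        rw [h2w, hdw]; ring
      · rw [h2z v hvw hvy, hdz v hvu hvw]

lemma exists_value_flow {x y : V} (hxy : x ≠ y) {k : ℕ}
    (hcut : ∀ S : Set V, x ∈ S → y ∉ S → k ≤ (G.edgeCut S).ncard) :
    ∃ f, IsUnit' f ∧ (∀ v, v ≠ x → v ≠ y → G.divz f v = 0) ∧ G.divz f x = k := by
  classical
  have main : ∀ j : ℕ, j ≤ k →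
      ∃ f, IsUnit' f ∧ (∀ v, v ≠ x → v ≠ y → G.divz f v = 0) ∧ G.divz f x = j := by
    intro j
    induction j with
    | zero =>
      intro _
      exact ⟨fun _ => 0, fun e => Or.inl rfl, fun v _ _ => by simp [divz], by simp [divz]⟩
    | succ j ihj =>
      intro hj
      obtain ⟨f, hf, hcons, hval⟩ := ihj (by omega)
      have hlt : G.divz f x < (k : ℤ) := by
        rw [hval]; exact_mod_cast (by omega : j < k)
      have hreach : Relation.ReflTransGen (G.stepz f) x y := by
        refine G.reach_of_value_lt hf hcons (fun S hS hyS => ?_) hlt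
        exact_mod_cast hcut S hS hyS
      rcases rtg_nodup_chain hreach with h | ⟨m, hchain, hnodup⟩
      · exact absurd h hxy
      · obtain ⟨f', hf', hdx, _, hdz⟩ := G.augment m x f hf hchain hnodup
        refine ⟨f', hf', fun v hvx hvy => ?_, by rw [hdx, hval]; push_cast; ring⟩
        rw [hdz v hvx hvy]
        exact hcons v hvx hvy
  exact main k le_rfl

end Augment

end Multigraph

/-! ### Flow decomposition and Menger -/

namespace Multigraph

variable {V : Type u} {E : Type v} {G : Multigraph V E}

def fdirz (G : Multigraph V E) (f : E → ℤ) (e : E) (u v : V) : Prop :=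
  (f e = 1 ∧ G.fst e = u ∧ G.snd e = v) ∨ (f e = -1 ∧ G.fst e = v ∧ G.snd e = u)

def FDirW (G : Multigraph V E) (f : E → ℤ) : ∀ {u v : V}, G.Walk u v → Prop
  | _, _, .nil _ => True
  | _, _, .cons (x := a) (y := b) e _ p => G.fdirz f e a b ∧ G.FDirW f p

lemma fdirz_inc {f : E → ℤ} {e : E} {u v : V} (h : G.fdirz f e u v) : G.Inc e u v := by
  rcases h with ⟨_, h1, h2⟩ | ⟨_, h1, h2⟩
  · exact Or.inl ⟨h1, h2⟩
  · exact Or.inr ⟨h1, h2⟩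

lemma fdirz_ne {f : E → ℤ} {e : E} {u v : V} (h : G.fdirz f e u v) : u ≠ v := by
  rcases h with ⟨_, h1, h2⟩ | ⟨_, h1, h2⟩
  · rw [← h1, ← h2]; exact G.loopless e
  · rw [← h1, ← h2]; exact (G.loopless e).symm

lemma fdirz_nonzero {f : E → ℤ} {e : E} {u v : V} (h : G.fdirz f e u v) : f e ≠ 0 := by
  rcases h with ⟨h, _, _⟩ | ⟨h, _, _⟩ <;> rw [h] <;> norm_num

lemma FDirW_congr {f f' : E → ℤ} : ∀ {u v : V} (w : G.Walk u v),
    (∀ e ∈ w.edges, f' e = f e) → G.FDirW f w → G.FDirW f' w := by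
  intro u v w
  induction w with
  | nil z => intro _ _; trivial
  | cons e h p ih =>
    intro hcong hfd
    obtain ⟨hd, hrest⟩ := hfd
    constructor
    · unfold fdirz at hd ⊢
      rw [hcong e (by simp [Walk.edges])]
      exact hd
    · exact ih (fun e' he' => hcong e' (by simp [Walk.edges, he'])) hrest

noncomputable def zeroOn (f : E → ℤ) (l : List E) : E → ℤ := fun e => if e ∈ l then 0 else f e

lemma zeroOn_nil (f : E → ℤ) : zeroOn f [] = f := funext fun e => by simp [zeroOn]

lemma zeroOn_cons (f : E → ℤ) (e : E) (l : List E) :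
    zeroOn f (e :: l) = zeroOn (Function.update f e 0) l := by
  classical
  funext e'
  by_cases h1 : e' ∈ l
  · simp [zeroOn, h1]
  · by_cases h2 : e' = e
    · subst h2; simp [zeroOn, h1]
    · simp [zeroOn, h1, h2, Function.update_of_ne h2]

lemma zeroOn_ne_zero {f : E → ℤ} {l : List E} {e : E} (h : zeroOn f l e ≠ 0) :
    f e ≠ 0 ∧ e ∉ l := by
  by_cases hm : e ∈ l
  · exact absurd (by simp [zeroOn, hm]) h
  · exact ⟨by simpa [zeroOn, hm] using h, hm⟩

section Decomp

variable [Fintype V] [Fintype E]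

lemma divz_zeroOn_walk : ∀ {u v : V} (w : G.Walk u v) (f : E → ℤ), G.FDirW f w →
    w.edges.Nodup → ∀ z : V, G.divz (zeroOn f w.edges) z
      = G.divz f z - (if z = u then 1 else 0) + (if z = v then 1 else 0) := by
  intro u v w
  induction w with
  | nil a =>
    intro f _ _ z
    show G.divz (zeroOn f []) z = _
    rw [zeroOn_nil]
    ring
  | cons e h p ih =>
    rename_i a b c
    intro f hfd hnd z
    obtain ⟨hd, hrest⟩ := hfd
    have hednd : (Walk.cons e h p).edges = e :: p.edges := rfl
    rw [hednd] at hnd ⊢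
    have hem : e ∉ p.edges := (List.nodup_cons.1 hnd).1
    have hnd' : p.edges.Nodup := (List.nodup_cons.1 hnd).2
    rw [zeroOn_cons]
    have hfd1 : G.FDirW (Function.update f e 0) p :=
      FDirW_congr p (fun e' he' => Function.update_of_ne (fun hh => hem (by rw [← hh]; exact he')) _ _) hrest
    rw [ih (Function.update f e 0) hfd1 hnd' z, G.divz_update]
    have hab : a ≠ b := fdirz_ne hd
    have claim : G.dirz e z * (0 - f e)
        = (if z = b then 1 else 0) - (if z = a then 1 else 0) := by
      rcases hd with ⟨h1, h2, h3⟩ | ⟨h1, h2, h3⟩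
      · rw [h1]
        unfold dirz
        rw [h2, h3]
        by_cases p : a = z <;> by_cases q : b = z
        · exact absurd (p.trans q.symm) hab
        · simp [p, q, eq_comm]
        · simp [p, q, eq_comm]
        · simp [p, q, eq_comm]
      · rw [h1]
        unfold dirz
        rw [h2, h3]
        by_cases p : a = z <;> by_cases q : b = z
        · exact absurd (p.trans q.symm) hab
        · simp [p, q, eq_comm]
        · simp [p, q, eq_comm]
        · simp [p, q, eq_comm]
    rw [claim]
    ring

lemma exists_fwalk : ∀ (n : ℕ) (f : E → ℤ),
    (Finset.univ.filter (fun e => f e ≠ 0)).card ≤ n → IsUnit' f →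
    ∀ u : V, 1 ≤ G.divz f u →
    ∃ (v : V) (w : G.Walk u v), G.FDirW f w ∧ w.edges.Nodup ∧
      (∀ e ∈ w.edges, f e ≠ 0) ∧ G.divz f v ≤ -1 := by
  intro n
  induction n with
  | zero =>
    intro f hcard hf u hdiv
    exfalso
    have hzero : ∀ e, f e = 0 := by
      intro e
      by_contra he
      have : e ∈ Finset.univ.filter (fun e => f e ≠ 0) := by simp [he]
      have := Finset.card_pos.2 ⟨e, this⟩
      omega
    have : G.divz f u = 0 := by
      unfold divz
      refine Finset.sum_eq_zero (fun e _ => ?_)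
      rw [hzero e]; ring
    omega
  | succ n ih =>
    intro f hcard hf u hdiv
    classical
    have hex : ∃ e w0, G.fdirz f e u w0 := by
      by_contra hno
      push_neg at hno
      have hterm : ∀ e : E, G.dirz e u * f e ≤ 0 := by
        intro e
        rcases hf e with h | h | h
        · simp [h]
        · have hfst : G.fst e ≠ u := by
            intro hh
            exact hno e (G.snd e) (Or.inl ⟨h, hh, rfl⟩)
          unfold dirz
          rw [h, if_neg hfst]
          by_cases h2 : G.snd e = u <;> simp [h2]
        · have hsnd : G.snd e ≠ u := by
            intro hh
            exact hno e (G.fst e) (Or.inr ⟨h, rfl, hh⟩)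
          unfold dirz
          rw [h, if_neg hsnd]
          by_cases h2 : G.fst e = u <;> simp [h2]
      have : G.divz f u ≤ 0 := Finset.sum_nonpos (fun e _ => hterm e)
      omega
    obtain ⟨e, w0, hdirw⟩ := hex
    have huw0 : u ≠ w0 := fdirz_ne hdirw
    have hfe : f e ≠ 0 := fdirz_nonzero hdirw
    set f1 := Function.update f e 0 with hf1def
    have hcard1 : (Finset.univ.filter (fun e => f1 e ≠ 0)).card ≤ n := by
      have hsub : Finset.univ.filter (fun e' => f1 e' ≠ 0)
          ⊆ (Finset.univ.filter (fun e' => f e' ≠ 0)).erase e := by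
        intro e' he'
        simp only [Finset.mem_filter, Finset.mem_univ, true_and] at he'
        have hne : e' ≠ e := by
          intro hh
          subst hh
          exact he' (by simp [hf1def])
        rw [Finset.mem_erase]
        have hf' : f e' ≠ 0 := by rwa [hf1def, Function.update_of_ne hne] at he'
        exact ⟨hne, by simp [hf']⟩
      have hmem : e ∈ Finset.univ.filter (fun e' => f e' ≠ 0) := by simp [hfe]
      have := Finset.card_le_card hsub
      rw [Finset.card_erase_of_mem hmem] at this
      omega
    have hf1 : IsUnit' f1 := by
      intro e'
      by_cases he : e' = e
      · subst he; simp [hf1def]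
      · rw [hf1def, Function.update_of_ne he]; exact hf e'
    have hdu : G.divz f1 u = G.divz f u - 1 := by
      rw [hf1def, G.divz_update]
      have : G.dirz e u * (0 - f e) = -1 := by
        rcases hdirw with ⟨h1, h2, h3⟩ | ⟨h1, h2, h3⟩
        · have : G.snd e ≠ u := by rw [h3]; exact Ne.symm huw0
          simp [dirz, h1, h2, this]
        · have : G.fst e ≠ u := by rw [h2]; exact Ne.symm huw0
          simp [dirz, h1, h3, this]
      rw [this]; try ring
    have hdw : G.divz f1 w0 = G.divz f w0 + 1 := by
      rw [hf1def, G.divz_update]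
      have : G.dirz e w0 * (0 - f e) = 1 := by
        rcases hdirw with ⟨h1, h2, h3⟩ | ⟨h1, h2, h3⟩
        · have : G.fst e ≠ w0 := by rw [h2]; exact huw0
          simp [dirz, h1, h3, this]
        · have : G.snd e ≠ w0 := by rw [h3]; exact huw0
          simp [dirz, h1, h2, this]
      rw [this]; try ring
    have hdz : ∀ z, z ≠ u → z ≠ w0 → G.divz f1 z = G.divz f z := by
      intro z hzu hzw
      rw [hf1def, G.divz_update]
      have : G.dirz e z = 0 := by
        rcases hdirw with ⟨_, h2, h3⟩ | ⟨_, h2, h3⟩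
        · exact G.dirz_eq_zero (h2 ▸ Ne.symm hzu) (h3 ▸ Ne.symm hzw)
        · exact G.dirz_eq_zero (h2 ▸ Ne.symm hzw) (h3 ▸ Ne.symm hzu)
      rw [this]; try ring
    by_cases hsink : G.divz f w0 ≤ -1
    · refine ⟨w0, Walk.cons e (fdirz_inc hdirw) (Walk.nil w0), ⟨hdirw, trivial⟩, ?_, ?_, hsink⟩
      · simp [Walk.edges]
      · intro e' he'
        have : e' = e := by simpa [Walk.edges] using he'
        subst this; exact hfe
    · have hpos : 1 ≤ G.divz f1 w0 := by
        rw [hdw]; linarith [not_le.1 hsink]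
      obtain ⟨v, w', hfd1, hnd, hsup, hv⟩ := ih f1 hcard1 hf1 w0 hpos
      have hvu : v ≠ u := by
        intro hh; subst hh
        rw [hdu] at hv; linarith
      have hvw0 : v ≠ w0 := by
        intro hh; subst hh; linarith
      have hew' : e ∉ w'.edges := by
        intro hmem
        exact hsup e hmem (by simp [hf1def])
      have hfdw' : G.FDirW f w' := by
        refine FDirW_congr w' (fun e' he' => ?_) hfd1
        have hne : e' ≠ e := fun hh => hew' (hh ▸ he')
        rw [hf1def, Function.update_of_ne hne]
      refine ⟨v, Walk.cons e (fdirz_inc hdirw) w', ⟨hdirw, hfdw'⟩, ?_, ?_, ?_⟩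
      · exact List.nodup_cons.2 ⟨hew', hnd⟩
      · intro e' he'
        rcases List.mem_cons.1 he' with hh | hh
        · subst hh; exact hfe
        · have hne : e' ≠ e := fun h2 => hew' (h2 ▸ hh)
          have := hsup e' hh
          rwa [hf1def, Function.update_of_ne hne] at this
      · rw [← hdz v hvu hvw0]; exact hv

lemma exists_walks {x y : V} (hxy : x ≠ y) : ∀ (m : ℕ) (f : E → ℤ), IsUnit' f →
    (∀ v, v ≠ x → v ≠ y → G.divz f v = 0) → G.divz f x = m →
    ∃ P : Fin m → G.Walk x y, (∀ i, ∀ e ∈ (P i).edges, f e ≠ 0) ∧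
      ∀ i j, i ≠ j → List.Disjoint (P i).edges (P j).edges := by
  intro m
  induction m with
  | zero =>
    intro f _ _ _
    exact ⟨fun i => i.elim0, fun i => i.elim0, fun i => i.elim0⟩
  | succ m ih =>
    intro f hf hcons hval
    obtain ⟨v, w, hfd, hnd, hsup, hv⟩ := G.exists_fwalk
      ((Finset.univ.filter (fun e => f e ≠ 0)).card) f le_rfl hf x
      (by rw [hval]; exact_mod_cast Nat.succ_le_succ (Nat.zero_le m))
    obtain rfl : v = y := by
      by_contra hvy
      have hvx : v ≠ x := by
        intro hh; subst hh
        rw [hval] at hv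
        have : (0:ℤ) ≤ ((m:ℤ)+1) := by positivity
        push_cast at hv
        omega
      rw [hcons v hvx hvy] at hv
      omega
    set f2 := zeroOn f w.edges with hf2def
    have hdf2 : ∀ z, G.divz f2 z
        = G.divz f z - (if z = x then 1 else 0) + (if z = v then 1 else 0) :=
      G.divz_zeroOn_walk w f hfd hnd
    have hf2unit : IsUnit' f2 := by
      intro e
      by_cases hm : e ∈ w.edges
      · left; simp [hf2def, zeroOn, hm]
      · have : f2 e = f e := by simp [hf2def, zeroOn, hm]
        rw [this]; exact hf e
    have hcons2 : ∀ z, z ≠ x → z ≠ v → G.divz f2 z = 0 := by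
      intro z hzx hzy
      rw [hdf2 z, hcons z hzx hzy, if_neg hzx, if_neg hzy]
      ring
    have hval2 : G.divz f2 x = m := by
      rw [hdf2 x, hval, if_pos rfl, if_neg hxy]
      push_cast
      ring
    obtain ⟨P', hsup', hdisj'⟩ := ih f2 hf2unit hcons2 hval2
    have hP'w : ∀ j, ∀ e ∈ (P' j).edges, e ∉ w.edges ∧ f e ≠ 0 := by
      intro j e he
      have := hsup' j e he
      have h2 := zeroOn_ne_zero (l := w.edges) (by rwa [hf2def] at this)
      exact ⟨h2.2, h2.1⟩
    refine ⟨fun i => Fin.cases w P' i, ?_, ?_⟩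
    · intro i
      rcases Fin.eq_zero_or_eq_succ i with rfl | ⟨i', rfl⟩
      · simpa using hsup
      · simp only [Fin.cases_succ]
        exact fun e he => (hP'w i' e he).2
    · intro i j hij
      rcases Fin.eq_zero_or_eq_succ i with rfl | ⟨i', rfl⟩ <;>
        rcases Fin.eq_zero_or_eq_succ j with rfl | ⟨j', rfl⟩
      · exact absurd rfl hij
      · simp only [Fin.cases_zero, Fin.cases_succ]
        exact fun e he1 he2 => (hP'w j' e he2).1 he1
      · simp only [Fin.cases_zero, Fin.cases_succ]
        exact fun e he1 he2 => (hP'w i' e he1).1 he2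
      · simp only [Fin.cases_succ]
        exact hdisj' i' j' (fun hh => hij (by rw [hh]))

end Decomp

theorem menger_hard [Finite V] [Finite E] {x y : V} (hxy : x ≠ y) {k : ℕ}
    (hcut : ∀ S : Set V, x ∈ S → y ∉ S → k ≤ (G.edgeCut S).ncard) :
    G.EdgeDisjointPaths k x y := by
  cases nonempty_fintype V
  cases nonempty_fintype E
  obtain ⟨f, hf, hcons, hval⟩ := G.exists_value_flow hxy hcut
  obtain ⟨P, hsup, hdisj⟩ := G.exists_walks hxy k f hf hcons hval
  have hpaths : ∀ i, ∃ p : G.Walk x y, p.IsPath ∧ ∀ e ∈ p.edges, e ∈ (P i).edges :=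
    fun i => (P i).exists_isPath
  choose Q hQ1 hQ2 using hpaths
  exact ⟨Q, hQ1, fun i j hij e he1 he2 => hdisj i j hij (hQ2 i e he1) (hQ2 j e he2)⟩


end Multigraph

/-! ### Block counting -/

namespace Multigraph

variable {V : Type u} {E : Type v} {G : Multigraph V E}

noncomputable def blk (X Y : Set V) (s : V) (v : V) : Fin 5 :=
  if v = s then 4 else if v ∈ X then (if v ∈ Y then 1 else 0) else if v ∈ Y then 2 else 3

lemma blk_eq_s_iff {X Y : Set V} {s : V} (hsX : s ∉ X) (hsY : s ∉ Y) (v : V) :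
    v = s ↔ blk X Y s v = 4 := by
  by_cases h1 : v = s <;> by_cases h2 : v ∈ X <;> by_cases h3 : v ∈ Y <;>
    simp_all [blk]

lemma blk_mem_X_iff {X Y : Set V} {s : V} (hsX : s ∉ X) (hsY : s ∉ Y) (v : V) :
    v ∈ X ↔ (blk X Y s v = 0 ∨ blk X Y s v = 1) := by
  by_cases h1 : v = s <;> by_cases h2 : v ∈ X <;> by_cases h3 : v ∈ Y <;>
    simp_all [blk]

lemma blk_mem_Y_iff {X Y : Set V} {s : V} (hsX : s ∉ X) (hsY : s ∉ Y) (v : V) :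
    v ∈ Y ↔ (blk X Y s v = 1 ∨ blk X Y s v = 2) := by
  by_cases h1 : v = s <;> by_cases h2 : v ∈ X <;> by_cases h3 : v ∈ Y <;>
    simp_all [blk]

section Cnt

variable [Fintype E]

/-- classical count of edges satisfying a predicate. -/
noncomputable def cnt (p : E → Prop) : ℕ :=
  (@Finset.filter E p (Classical.decPred p) Finset.univ).card

lemma cnt_congr {p q : E → Prop} (h : ∀ e, p e ↔ q e) : cnt p = cnt q := by
  have hpq : p = q := funext fun e => propext (h e)
  subst hpq
  rfl

lemma ncard_eq_cnt (s : Set E) : s.ncard = cnt (fun e => e ∈ s) := by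
  classical
  rw [ncard_eq_card_filter]
  unfold cnt
  congr 1

lemma cnt_or {p q : E → Prop} (h : ∀ e, ¬(p e ∧ q e)) :
    cnt (fun e => p e ∨ q e) = cnt p + cnt q := by
  classical
  unfold cnt
  have hsplit : @Finset.filter E (fun e => p e ∨ q e) (Classical.decPred _) Finset.univ
      = (@Finset.filter E p (Classical.decPred p) Finset.univ)
        ∪ (@Finset.filter E q (Classical.decPred q) Finset.univ) := by
    ext e
    simp [Finset.mem_filter, Finset.mem_union]
  rw [hsplit, Finset.card_union_of_disjoint]
  rw [Finset.disjoint_left]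
  intro e he1 he2
  rw [Finset.mem_filter] at he1 he2
  exact h e ⟨he1.2, he2.2⟩

lemma cnt_or4 {p1 p2 p3 p4 : E → Prop}
    (h1 : ∀ e, ¬(p1 e ∧ (p2 e ∨ p3 e ∨ p4 e)))
    (h2 : ∀ e, ¬(p2 e ∧ (p3 e ∨ p4 e)))
    (h3 : ∀ e, ¬(p3 e ∧ p4 e)) :
    cnt (fun e => p1 e ∨ p2 e ∨ p3 e ∨ p4 e)
      = cnt p1 + (cnt p2 + (cnt p3 + cnt p4)) := by
  rw [cnt_or h1, cnt_or h2, cnt_or h3]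

lemma cnt_or6 {p1 p2 p3 p4 p5 p6 : E → Prop}
    (h1 : ∀ e, ¬(p1 e ∧ (p2 e ∨ p3 e ∨ p4 e ∨ p5 e ∨ p6 e)))
    (h2 : ∀ e, ¬(p2 e ∧ (p3 e ∨ p4 e ∨ p5 e ∨ p6 e)))
    (h3 : ∀ e, ¬(p3 e ∧ (p4 e ∨ p5 e ∨ p6 e)))
    (h4 : ∀ e, ¬(p4 e ∧ (p5 e ∨ p6 e)))
    (h5 : ∀ e, ¬(p5 e ∧ p6 e)) :
    cnt (fun e => p1 e ∨ p2 e ∨ p3 e ∨ p4 e ∨ p5 e ∨ p6 e)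
      = cnt p1 + (cnt p2 + (cnt p3 + (cnt p4 + (cnt p5 + cnt p6)))) := by
  rw [cnt_or h1, cnt_or h2, cnt_or h3, cnt_or h4, cnt_or h5]

lemma cnt_pos {p : E → Prop} {e : E} (h : p e) : 1 ≤ cnt p := by
  refine Finset.card_pos.2 ⟨e, ?_⟩
  rw [Finset.mem_filter]
  exact ⟨Finset.mem_univ e, h⟩

end Cnt

/-- number of edges between block `i` and block `j`. -/
noncomputable def pc [Fintype E] (G : Multigraph V E) (X Y : Set V) (s : V) (i j : Fin 5) : ℕ :=
  cnt (fun e => (blk X Y s (G.fst e) = i ∧ blk X Y s (G.snd e) = j)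
    ∨ (blk X Y s (G.fst e) = j ∧ blk X Y s (G.snd e) = i))

end Multigraph

/-! ### Cut identities and the union lemma for witnesses -/

namespace Multigraph

variable {V : Type u} {E : Type v} {G : Multigraph V E}

section Identities

variable [Fintype E] {X Y : Set V} {s : V}

lemma cnt_zero {p : E → Prop} (h : ∀ e, ¬ p e) : cnt p = 0 := by
  unfold cnt
  rw [Finset.card_eq_zero, Finset.filter_eq_empty_iff]
  exact fun {e} _ => h e

lemma cut_X_pc (hsX : s ∉ X) (hsY : s ∉ Y) :
    (G.edgeCut X).ncard = G.pc X Y s 0 2 + (G.pc X Y s 0 3 + (G.pc X Y s 0 4 +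
      (G.pc X Y s 1 2 + (G.pc X Y s 1 3 + G.pc X Y s 1 4)))) := by
  classical
  rw [ncard_eq_cnt]
  have hiff : ∀ e : E, (e ∈ G.edgeCut X) ↔
      ((blk X Y s (G.fst e) = 0 ∧ blk X Y s (G.snd e) = 2) ∨ (blk X Y s (G.fst e) = 2 ∧ blk X Y s (G.snd e) = 0))
      ∨ ((blk X Y s (G.fst e) = 0 ∧ blk X Y s (G.snd e) = 3) ∨ (blk X Y s (G.fst e) = 3 ∧ blk X Y s (G.snd e) = 0))
      ∨ ((blk X Y s (G.fst e) = 0 ∧ blk X Y s (G.snd e) = 4) ∨ (blk X Y s (G.fst e) = 4 ∧ blk X Y s (G.snd e) = 0))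
      ∨ ((blk X Y s (G.fst e) = 1 ∧ blk X Y s (G.snd e) = 2) ∨ (blk X Y s (G.fst e) = 2 ∧ blk X Y s (G.snd e) = 1))
      ∨ ((blk X Y s (G.fst e) = 1 ∧ blk X Y s (G.snd e) = 3) ∨ (blk X Y s (G.fst e) = 3 ∧ blk X Y s (G.snd e) = 1))
      ∨ ((blk X Y s (G.fst e) = 1 ∧ blk X Y s (G.snd e) = 4) ∨ (blk X Y s (G.fst e) = 4 ∧ blk X Y s (G.snd e) = 1)) := by
    intro e
    simp only [edgeCut, Set.mem_setOf_eq, blk_mem_X_iff hsX hsY]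
    generalize blk X Y s (G.fst e) = p
    generalize blk X Y s (G.snd e) = q
    revert p q
    decide
  rw [cnt_congr hiff, cnt_or6
    (fun e => by generalize blk X Y s (G.fst e) = p; generalize blk X Y s (G.snd e) = q; revert p q; decide)
    (fun e => by generalize blk X Y s (G.fst e) = p; generalize blk X Y s (G.snd e) = q; revert p q; decide)
    (fun e => by generalize blk X Y s (G.fst e) = p; generalize blk X Y s (G.snd e) = q; revert p q; decide)
    (fun e => by generalize blk X Y s (G.fst e) = p; generalize blk X Y s (G.snd e) = q; revert p q; decide)
    (fun e => by generalize blk X Y s (G.fst e) = p; generalize blk X Y s (G.snd e) = q; revert p q; decide)]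
  rfl

end Identities

end Multigraph

namespace Multigraph

variable {V : Type u} {E : Type v} {G : Multigraph V E}

section Identities2

variable [Fintype E] {X Y : Set V} {s : V}

lemma cut_Y_pc (hsX : s ∉ X) (hsY : s ∉ Y) :
    (G.edgeCut (Y)).ncard = G.pc X Y s 0 1 + (G.pc X Y s 0 2 + (G.pc X Y s 1 3 + (G.pc X Y s 1 4 + (G.pc X Y s 2 3 + (G.pc X Y s 2 4))))) := by
  classical
  rw [ncard_eq_cnt]
  have hiff : ∀ e : E, (e ∈ G.edgeCut (Y)) ↔
      ((blk X Y s (G.fst e) = 0 ∧ blk X Y s (G.snd e) = 1) ∨ (blk X Y s (G.fst e) = 1 ∧ blk X Y s (G.snd e) = 0))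
      ∨ ((blk X Y s (G.fst e) = 0 ∧ blk X Y s (G.snd e) = 2) ∨ (blk X Y s (G.fst e) = 2 ∧ blk X Y s (G.snd e) = 0))
      ∨ ((blk X Y s (G.fst e) = 1 ∧ blk X Y s (G.snd e) = 3) ∨ (blk X Y s (G.fst e) = 3 ∧ blk X Y s (G.snd e) = 1))
      ∨ ((blk X Y s (G.fst e) = 1 ∧ blk X Y s (G.snd e) = 4) ∨ (blk X Y s (G.fst e) = 4 ∧ blk X Y s (G.snd e) = 1))
      ∨ ((blk X Y s (G.fst e) = 2 ∧ blk X Y s (G.snd e) = 3) ∨ (blk X Y s (G.fst e) = 3 ∧ blk X Y s (G.snd e) = 2))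
      ∨ ((blk X Y s (G.fst e) = 2 ∧ blk X Y s (G.snd e) = 4) ∨ (blk X Y s (G.fst e) = 4 ∧ blk X Y s (G.snd e) = 2)) := by
    intro e
    simp only [edgeCut, Set.mem_setOf_eq, blk_mem_X_iff hsX hsY, blk_mem_Y_iff hsX hsY]
    generalize blk X Y s (G.fst e) = p
    generalize blk X Y s (G.snd e) = q
    revert p q
    decide
  rw [cnt_congr hiff, cnt_or6
    (fun e => by generalize blk X Y s (G.fst e) = p; generalize blk X Y s (G.snd e) = q; revert p q; decide)
    (fun e => by generalize blk X Y s (G.fst e) = p; generalize blk X Y s (G.snd e) = q; revert p q; decide)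
    (fun e => by generalize blk X Y s (G.fst e) = p; generalize blk X Y s (G.snd e) = q; revert p q; decide)
    (fun e => by generalize blk X Y s (G.fst e) = p; generalize blk X Y s (G.snd e) = q; revert p q; decide)
    (fun e => by generalize blk X Y s (G.fst e) = p; generalize blk X Y s (G.snd e) = q; revert p q; decide)]
  rfl

lemma cut_A_pc (hsX : s ∉ X) (hsY : s ∉ Y) :
    (G.edgeCut (X \ Y)).ncard = G.pc X Y s 0 1 + (G.pc X Y s 0 2 + (G.pc X Y s 0 3 + (G.pc X Y s 0 4))) := by
  classical
  rw [ncard_eq_cnt]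
  have hiff : ∀ e : E, (e ∈ G.edgeCut (X \ Y)) ↔
      ((blk X Y s (G.fst e) = 0 ∧ blk X Y s (G.snd e) = 1) ∨ (blk X Y s (G.fst e) = 1 ∧ blk X Y s (G.snd e) = 0))
      ∨ ((blk X Y s (G.fst e) = 0 ∧ blk X Y s (G.snd e) = 2) ∨ (blk X Y s (G.fst e) = 2 ∧ blk X Y s (G.snd e) = 0))
      ∨ ((blk X Y s (G.fst e) = 0 ∧ blk X Y s (G.snd e) = 3) ∨ (blk X Y s (G.fst e) = 3 ∧ blk X Y s (G.snd e) = 0))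
      ∨ ((blk X Y s (G.fst e) = 0 ∧ blk X Y s (G.snd e) = 4) ∨ (blk X Y s (G.fst e) = 4 ∧ blk X Y s (G.snd e) = 0)) := by
    intro e
    simp only [edgeCut, Set.mem_setOf_eq, blk_mem_X_iff hsX hsY, blk_mem_Y_iff hsX hsY, Set.mem_diff]
    generalize blk X Y s (G.fst e) = p
    generalize blk X Y s (G.snd e) = q
    revert p q
    decide
  rw [cnt_congr hiff, cnt_or4
    (fun e => by generalize blk X Y s (G.fst e) = p; generalize blk X Y s (G.snd e) = q; revert p q; decide)
    (fun e => by generalize blk X Y s (G.fst e) = p; generalize blk X Y s (G.snd e) = q; revert p q; decide)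
    (fun e => by generalize blk X Y s (G.fst e) = p; generalize blk X Y s (G.snd e) = q; revert p q; decide)]
  rfl

lemma cut_B_pc (hsX : s ∉ X) (hsY : s ∉ Y) :
    (G.edgeCut (X ∩ Y)).ncard = G.pc X Y s 0 1 + (G.pc X Y s 1 2 + (G.pc X Y s 1 3 + (G.pc X Y s 1 4))) := by
  classical
  rw [ncard_eq_cnt]
  have hiff : ∀ e : E, (e ∈ G.edgeCut (X ∩ Y)) ↔
      ((blk X Y s (G.fst e) = 0 ∧ blk X Y s (G.snd e) = 1) ∨ (blk X Y s (G.fst e) = 1 ∧ blk X Y s (G.snd e) = 0))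
      ∨ ((blk X Y s (G.fst e) = 1 ∧ blk X Y s (G.snd e) = 2) ∨ (blk X Y s (G.fst e) = 2 ∧ blk X Y s (G.snd e) = 1))
      ∨ ((blk X Y s (G.fst e) = 1 ∧ blk X Y s (G.snd e) = 3) ∨ (blk X Y s (G.fst e) = 3 ∧ blk X Y s (G.snd e) = 1))
      ∨ ((blk X Y s (G.fst e) = 1 ∧ blk X Y s (G.snd e) = 4) ∨ (blk X Y s (G.fst e) = 4 ∧ blk X Y s (G.snd e) = 1)) := by
    intro e
    simp only [edgeCut, Set.mem_setOf_eq, blk_mem_X_iff hsX hsY, blk_mem_Y_iff hsX hsY, Set.mem_inter_iff]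
    generalize blk X Y s (G.fst e) = p
    generalize blk X Y s (G.snd e) = q
    revert p q
    decide
  rw [cnt_congr hiff, cnt_or4
    (fun e => by generalize blk X Y s (G.fst e) = p; generalize blk X Y s (G.snd e) = q; revert p q; decide)
    (fun e => by generalize blk X Y s (G.fst e) = p; generalize blk X Y s (G.snd e) = q; revert p q; decide)
    (fun e => by generalize blk X Y s (G.fst e) = p; generalize blk X Y s (G.snd e) = q; revert p q; decide)]
  rfl

lemma cut_C_pc (hsX : s ∉ X) (hsY : s ∉ Y) :
    (G.edgeCut (Y \ X)).ncard = G.pc X Y s 0 2 + (G.pc X Y s 1 2 + (G.pc X Y s 2 3 + (G.pc X Y s 2 4))) := by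
  classical
  rw [ncard_eq_cnt]
  have hiff : ∀ e : E, (e ∈ G.edgeCut (Y \ X)) ↔
      ((blk X Y s (G.fst e) = 0 ∧ blk X Y s (G.snd e) = 2) ∨ (blk X Y s (G.fst e) = 2 ∧ blk X Y s (G.snd e) = 0))
      ∨ ((blk X Y s (G.fst e) = 1 ∧ blk X Y s (G.snd e) = 2) ∨ (blk X Y s (G.fst e) = 2 ∧ blk X Y s (G.snd e) = 1))
      ∨ ((blk X Y s (G.fst e) = 2 ∧ blk X Y s (G.snd e) = 3) ∨ (blk X Y s (G.fst e) = 3 ∧ blk X Y s (G.snd e) = 2))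
      ∨ ((blk X Y s (G.fst e) = 2 ∧ blk X Y s (G.snd e) = 4) ∨ (blk X Y s (G.fst e) = 4 ∧ blk X Y s (G.snd e) = 2)) := by
    intro e
    simp only [edgeCut, Set.mem_setOf_eq, blk_mem_X_iff hsX hsY, blk_mem_Y_iff hsX hsY, Set.mem_diff]
    generalize blk X Y s (G.fst e) = p
    generalize blk X Y s (G.snd e) = q
    revert p q
    decide
  rw [cnt_congr hiff, cnt_or4
    (fun e => by generalize blk X Y s (G.fst e) = p; generalize blk X Y s (G.snd e) = q; revert p q; decide)
    (fun e => by generalize blk X Y s (G.fst e) = p; generalize blk X Y s (G.snd e) = q; revert p q; decide)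
    (fun e => by generalize blk X Y s (G.fst e) = p; generalize blk X Y s (G.snd e) = q; revert p q; decide)]
  rfl

lemma cut_U_pc (hsX : s ∉ X) (hsY : s ∉ Y) :
    (G.edgeCut (X ∪ Y)).ncard = G.pc X Y s 0 3 + (G.pc X Y s 0 4 + (G.pc X Y s 1 3 + (G.pc X Y s 1 4 + (G.pc X Y s 2 3 + (G.pc X Y s 2 4))))) := by
  classical
  rw [ncard_eq_cnt]
  have hiff : ∀ e : E, (e ∈ G.edgeCut (X ∪ Y)) ↔
      ((blk X Y s (G.fst e) = 0 ∧ blk X Y s (G.snd e) = 3) ∨ (blk X Y s (G.fst e) = 3 ∧ blk X Y s (G.snd e) = 0))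
      ∨ ((blk X Y s (G.fst e) = 0 ∧ blk X Y s (G.snd e) = 4) ∨ (blk X Y s (G.fst e) = 4 ∧ blk X Y s (G.snd e) = 0))
      ∨ ((blk X Y s (G.fst e) = 1 ∧ blk X Y s (G.snd e) = 3) ∨ (blk X Y s (G.fst e) = 3 ∧ blk X Y s (G.snd e) = 1))
      ∨ ((blk X Y s (G.fst e) = 1 ∧ blk X Y s (G.snd e) = 4) ∨ (blk X Y s (G.fst e) = 4 ∧ blk X Y s (G.snd e) = 1))
      ∨ ((blk X Y s (G.fst e) = 2 ∧ blk X Y s (G.snd e) = 3) ∨ (blk X Y s (G.fst e) = 3 ∧ blk X Y s (G.snd e) = 2))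
      ∨ ((blk X Y s (G.fst e) = 2 ∧ blk X Y s (G.snd e) = 4) ∨ (blk X Y s (G.fst e) = 4 ∧ blk X Y s (G.snd e) = 2)) := by
    intro e
    simp only [edgeCut, Set.mem_setOf_eq, blk_mem_X_iff hsX hsY, blk_mem_Y_iff hsX hsY, Set.mem_union]
    generalize blk X Y s (G.fst e) = p
    generalize blk X Y s (G.snd e) = q
    revert p q
    decide
  rw [cnt_congr hiff, cnt_or6
    (fun e => by generalize blk X Y s (G.fst e) = p; generalize blk X Y s (G.snd e) = q; revert p q; decide)
    (fun e => by generalize blk X Y s (G.fst e) = p; generalize blk X Y s (G.snd e) = q; revert p q; decide)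
    (fun e => by generalize blk X Y s (G.fst e) = p; generalize blk X Y s (G.snd e) = q; revert p q; decide)
    (fun e => by generalize blk X Y s (G.fst e) = p; generalize blk X Y s (G.snd e) = q; revert p q; decide)
    (fun e => by generalize blk X Y s (G.fst e) = p; generalize blk X Y s (G.snd e) = q; revert p q; decide)]
  rfl

lemma deg_pc (hsX : s ∉ X) (hsY : s ∉ Y) :
    G.degree s = G.pc X Y s 0 4 + (G.pc X Y s 1 4 + (G.pc X Y s 2 4 + (G.pc X Y s 3 4))) := by
  classical
  rw [degree, ncard_eq_cnt]
  have hiff : ∀ e : E, (e ∈ {e : E | G.IncVert s e}) ↔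
      ((blk X Y s (G.fst e) = 0 ∧ blk X Y s (G.snd e) = 4) ∨ (blk X Y s (G.fst e) = 4 ∧ blk X Y s (G.snd e) = 0))
      ∨ ((blk X Y s (G.fst e) = 1 ∧ blk X Y s (G.snd e) = 4) ∨ (blk X Y s (G.fst e) = 4 ∧ blk X Y s (G.snd e) = 1))
      ∨ ((blk X Y s (G.fst e) = 2 ∧ blk X Y s (G.snd e) = 4) ∨ (blk X Y s (G.fst e) = 4 ∧ blk X Y s (G.snd e) = 2))
      ∨ ((blk X Y s (G.fst e) = 3 ∧ blk X Y s (G.snd e) = 4) ∨ (blk X Y s (G.fst e) = 4 ∧ blk X Y s (G.snd e) = 3)) := by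
    intro e
    have hne : ¬(blk X Y s (G.fst e) = 4 ∧ blk X Y s (G.snd e) = 4) := by
      rintro ⟨u1, u2⟩
      exact G.loopless e (((blk_eq_s_iff hsX hsY (G.fst e)).2 u1).trans
        ((blk_eq_s_iff hsX hsY (G.snd e)).2 u2).symm)
    revert hne
    simp only [Set.mem_setOf_eq, IncVert, blk_eq_s_iff hsX hsY]
    generalize blk X Y s (G.fst e) = p
    generalize blk X Y s (G.snd e) = q
    revert p q
    decide
  rw [cnt_congr hiff, cnt_or4
    (fun e => by generalize blk X Y s (G.fst e) = p; generalize blk X Y s (G.snd e) = q; revert p q; decide)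
    (fun e => by generalize blk X Y s (G.fst e) = p; generalize blk X Y s (G.snd e) = q; revert p q; decide)
    (fun e => by generalize blk X Y s (G.fst e) = p; generalize blk X Y s (G.snd e) = q; revert p q; decide)]
  rfl

end Identities2

end Multigraph

/-! ### Witness sets and the union lemma -/

namespace Multigraph

variable {V : Type u} {E : Type v} {G : Multigraph V E}

/-- A witness set certifying non-liftability: a set avoiding `s`, with a vertex
other than `s` outside it, whose cut has at most `k+1` edges. -/
def Wit (G : Multigraph V E) (s : V) (k : ℕ) (X : Set V) : Prop :=
  s ∉ X ∧ (∃ w, w ∉ X ∧ w ≠ s) ∧ (G.edgeCut X).ncard ≤ k + 1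

lemma wit_union [Fintype V] [Fintype E] {s : V} {k : ℕ}
    (hconn : G.SEdgeConnected s k) (hke : Even k) (hde : Even (G.degree s))
    {X Y : Set V} (hX : G.Wit s k X) (hY : G.Wit s k Y) {m : E} (hm : G.IncVert s m)
    (hmX : G.other s m ∈ X) (hmY : G.other s m ∈ Y) : G.Wit s k (X ∪ Y) := by
  classical
  obtain ⟨hsX, hwX, hdX⟩ := hX
  obtain ⟨hsY, hwY, hdY⟩ := hY
  by_cases hXY : X ⊆ Y
  · rw [Set.union_eq_self_of_subset_left hXY]
    exact ⟨hsY, hwY, hdY⟩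
  by_cases hYX : Y ⊆ X
  · rw [Set.union_eq_self_of_subset_right hYX]
    exact ⟨hsX, hwX, hdX⟩
  obtain ⟨a, haX, haY⟩ := Set.not_subset.1 hXY
  obtain ⟨c, hcY, hcX⟩ := Set.not_subset.1 hYX
  have hms : G.other s m ≠ s := other_ne hm
  have has : a ≠ s := fun h => hsX (h ▸ haX)
  have hcs : c ≠ s := fun h => hsY (h ▸ hcY)
  have hsU : s ∉ X ∪ Y := fun h => h.elim hsX hsY
  -- lower bounds from edge-connectivity
  have hdA : k ≤ (G.edgeCut (X \ Y)).ncard :=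
    hconn.cut_lb ⟨haX, haY⟩ (fun h => h.2 hmY) has hms
  have hdB : k ≤ (G.edgeCut (X ∩ Y)).ncard :=
    hconn.cut_lb ⟨hmX, hmY⟩ (fun h => haY h.2) hms has
  have hdC : k ≤ (G.edgeCut (Y \ X)).ncard :=
    hconn.cut_lb ⟨hcY, hcX⟩ (fun h => h.2 hmX) hcs hms
  -- the special edge m contributes to pc 1 4
  have hbm : blk X Y s (G.other s m) = 1 := by
    have hx := (blk_mem_X_iff hsX hsY _).1 hmX
    have hy := (blk_mem_Y_iff hsX hsY _).1 hmY
    have : ∀ p : Fin 5, (p = 0 ∨ p = 1) → (p = 1 ∨ p = 2) → p = 1 := by decide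
    exact this _ hx hy
  have hbs : blk X Y s s = 4 := (blk_eq_s_iff hsX hsY s).1 rfl
  have hn14 : 1 ≤ G.pc X Y s 1 4 := by
    rcases inc_s_other hm with ⟨h1, h2⟩ | ⟨h1, h2⟩
    · exact cnt_pos (e := m) (Or.inr ⟨by rw [h1]; exact hbs, by rw [h2]; exact hbm⟩)
    · exact cnt_pos (e := m) (Or.inl ⟨by rw [h1]; exact hbm, by rw [h2]; exact hbs⟩)
  -- identities
  have idX := G.cut_X_pc hsX hsY
  have idY := G.cut_Y_pc hsX hsY
  have idA := G.cut_A_pc hsX hsY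
  have idB := G.cut_B_pc hsX hsY
  have idC := G.cut_C_pc hsX hsY
  have idU := G.cut_U_pc hsX hsY
  have idD := G.deg_pc hsX hsY
  obtain ⟨kk, hkk⟩ := hke
  by_cases hW : ∃ w, w ∉ X ∪ Y ∧ w ≠ s
  · refine ⟨hsU, hW, ?_⟩
    by_contra hbig
    push_neg at hbig
    omega
  · exfalso
    push_neg at hW
    have hz : ∀ v, blk X Y s v ≠ 3 := by
      intro v
      by_cases hv : v ∈ X ∪ Y
      · have := (blk_mem_X_iff hsX hsY v)
        have := (blk_mem_Y_iff hsX hsY v)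
        rcases hv with h | h
        · have h03 : ∀ p : Fin 5, (p = 0 ∨ p = 1) → p ≠ 3 := by decide
          exact h03 _ ((blk_mem_X_iff hsX hsY v).1 h)
        · have h03 : ∀ p : Fin 5, (p = 1 ∨ p = 2) → p ≠ 3 := by decide
          exact h03 _ ((blk_mem_Y_iff hsX hsY v).1 h)
      · have := hW v hv
        rw [this]
        rw [hbs]
        decide
    have hz03 : G.pc X Y s 0 3 = 0 := cnt_zero (fun e h => by
      rcases h with ⟨_, h2⟩ | ⟨h1, _⟩; exacts [hz _ h2, hz _ h1])
    have hz13 : G.pc X Y s 1 3 = 0 := cnt_zero (fun e h => by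
      rcases h with ⟨_, h2⟩ | ⟨h1, _⟩; exacts [hz _ h2, hz _ h1])
    have hz23 : G.pc X Y s 2 3 = 0 := cnt_zero (fun e h => by
      rcases h with ⟨_, h2⟩ | ⟨h1, _⟩; exacts [hz _ h2, hz _ h1])
    have hz34 : G.pc X Y s 3 4 = 0 := cnt_zero (fun e h => by
      rcases h with ⟨h1, _⟩ | ⟨_, h2⟩; exacts [hz _ h1, hz _ h2])
    obtain ⟨dd, hdd⟩ := hde
    omega

end Multigraph

/-! ### Cuts in the lifted graph -/

namespace Multigraph

variable {W F : Type u} {G : Multigraph W F}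

lemma Inc.symm' {e : F} {a b : W} (h : G.Inc e a b) : G.Inc e b a := h.symm

lemma not_mem_edgeCut_both {S : Set W} {e : F} {a b : W} (h : G.Inc e a b)
    (ha : a ∈ S) (hb : b ∈ S) : e ∉ G.edgeCut S := by
  rcases h with ⟨h1, h2⟩ | ⟨h1, h2⟩ <;>
    (rintro (⟨u1, u2⟩ | ⟨u1, u2⟩) <;> simp_all)

lemma not_mem_edgeCut_neither {S : Set W} {e : F} {a b : W} (h : G.Inc e a b)
    (ha : a ∉ S) (hb : b ∉ S) : e ∉ G.edgeCut S := by
  rcases h with ⟨h1, h2⟩ | ⟨h1, h2⟩ <;>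
    (rintro (⟨u1, u2⟩ | ⟨u1, u2⟩) <;> simp_all)

lemma edgeCut_compl (G : Multigraph W F) (S : Set W) : G.edgeCut Sᶜ = G.edgeCut S := by
  ext e
  simp only [edgeCut, Set.mem_setOf_eq, Set.mem_compl_iff, not_not]
  tauto

section LiftCuts

variable {s : W} {e₁ e₂ : F} [Finite F]

lemma liftE_finite (G : Multigraph W F) (s : W) (e₁ e₂ : F) : Finite (G.lift s e₁ e₂).E :=
  inferInstanceAs (Finite ({e : F // e ≠ e₁ ∧ e ≠ e₂}
    ⊕ {_p : PUnit.{u + 1} // G.other s e₁ ≠ G.other s e₂}))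

/-- the image of the non-lifted cut edges inside the lifted edge type. -/
noncomputable def inlCut (G : Multigraph W F) (s : W) (e₁ e₂ : F) (S : Set W) :
    Set (G.lift s e₁ e₂).E :=
  Sum.inl '' {x : {e : F // e ≠ e₁ ∧ e ≠ e₂} | x.1 ∈ G.edgeCut S}

lemma inlCut_subset (G : Multigraph W F) (s : W) (e₁ e₂ : F) (S : Set W) :
    G.inlCut s e₁ e₂ S ⊆ (G.lift s e₁ e₂).graph.edgeCut S := by
  rintro y ⟨x, hx, rfl⟩
  rcases hx with ⟨u1, u2⟩ | ⟨u1, u2⟩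
  · exact Or.inl ⟨u1, u2⟩
  · exact Or.inr ⟨u1, u2⟩

lemma inlCut_ncard (G : Multigraph W F) (s : W) (e₁ e₂ : F) (S : Set W) :
    (G.inlCut s e₁ e₂ S).ncard = (G.edgeCut S \ {e₁, e₂}).ncard := by
  rw [inlCut]; refine (Set.ncard_image_of_injective _ Sum.inl_injective).trans ?_
  rw [← Set.ncard_image_of_injective _ (Subtype.val_injective
    (p := fun e => e ≠ e₁ ∧ e ≠ e₂))]
  congr 1
  ext e
  constructor
  · rintro ⟨x, hx, rfl⟩
    refine ⟨hx, ?_⟩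
    simp only [Set.mem_insert_iff, Set.mem_singleton_iff]
    push_neg
    exact x.2
  · rintro ⟨hc, hp⟩
    simp only [Set.mem_insert_iff, Set.mem_singleton_iff] at hp
    push_neg at hp
    exact ⟨⟨e, hp⟩, hc, rfl⟩

lemma lift_cut_lower (G : Multigraph W F) (s : W) (e₁ e₂ : F) (S : Set W) :
    (G.edgeCut S \ {e₁, e₂}).ncard ≤ ((G.lift s e₁ e₂).graph.edgeCut S).ncard := by
  haveI := G.liftE_finite s e₁ e₂
  rw [← G.inlCut_ncard s e₁ e₂ S]
  exact Set.ncard_le_ncard (G.inlCut_subset s e₁ e₂ S) (Set.toFinite _)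

/-- case: both other-endpoints inside `S` (and `s ∉ S`). -/
lemma lift_cut_both {S : Set W} (hs1 : G.IncVert s e₁) (hs2 : G.IncVert s e₂)
    (hne : e₁ ≠ e₂) (hsS : s ∉ S) (h1 : G.other s e₁ ∈ S) (h2 : G.other s e₂ ∈ S) :
    ((G.lift s e₁ e₂).graph.edgeCut S).ncard + 2 = (G.edgeCut S).ncard := by
  classical
  haveI hF : Finite (G.lift s e₁ e₂).E := G.liftE_finite s e₁ e₂
  have he1 : e₁ ∈ G.edgeCut S := mem_edgeCut_of_inc (inc_s_other hs1).symm' h1 hsS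
  have he2 : e₂ ∈ G.edgeCut S := mem_edgeCut_of_inc (inc_s_other hs2).symm' h2 hsS
  have hpairsub : {e₁, e₂} ⊆ G.edgeCut S := by
    intro x hx
    rcases hx with rfl | hx
    · exact he1
    · rw [Set.mem_singleton_iff] at hx
      exact hx ▸ he2
  have hd : (G.edgeCut S \ {e₁, e₂}).ncard = (G.edgeCut S).ncard - 2 := by
    rw [Set.ncard_diff hpairsub, Set.ncard_pair hne]
  have h2le : 2 ≤ (G.edgeCut S).ncard := by
    calc 2 = ({e₁, e₂} : Set F).ncard := (Set.ncard_pair hne).symm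
      _ ≤ _ := Set.ncard_le_ncard hpairsub (Set.toFinite _)
  have hlo := G.lift_cut_lower s e₁ e₂ S
  -- upper bound : lifted cut injects into cut minus the pair
  have hup : ((G.lift s e₁ e₂).graph.edgeCut S).ncard ≤ (G.edgeCut S \ {e₁, e₂}).ncard := by
    refine Set.ncard_le_ncard_of_injOn
      (Sum.elim (fun e => e.1) (fun _ => e₁)) ?_ ?_ (Set.toFinite _)
    · rintro (⟨e, he⟩ | ⟨p, hp⟩) hmem
      · refine ⟨hmem, ?_⟩
        simp only [Set.mem_insert_iff, Set.mem_singleton_iff]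
        push_neg
        exact he
      · exfalso
        exact not_mem_edgeCut_both (a := G.other s e₁) (b := G.other s e₂)
          (Or.inl ⟨rfl, rfl⟩) h1 h2 hmem
    · rintro (⟨e, he⟩ | ⟨p, hp⟩) hmem (⟨e', he'⟩ | ⟨p', hp'⟩) hmem' heq
      · have hee : e = e' := by simpa using heq
        subst hee
        rfl
      · exfalso
        exact not_mem_edgeCut_both (a := G.other s e₁) (b := G.other s e₂)
          (Or.inl ⟨rfl, rfl⟩) h1 h2 hmem'
      · exfalso
        exact not_mem_edgeCut_both (a := G.other s e₁) (b := G.other s e₂)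
          (Or.inl ⟨rfl, rfl⟩) h1 h2 hmem
      · exfalso
        exact not_mem_edgeCut_both (a := G.other s e₁) (b := G.other s e₂)
          (Or.inl ⟨rfl, rfl⟩) h1 h2 hmem
  omega

/-- case : not both other-endpoints in `S` : old cut is at most the new cut. -/
lemma lift_cut_le {S : Set W} (hs1 : G.IncVert s e₁) (hs2 : G.IncVert s e₂)
    (hne : e₁ ≠ e₂) (hsS : s ∉ S) (hnot : ¬ (G.other s e₁ ∈ S ∧ G.other s e₂ ∈ S)) :
    (G.edgeCut S).ncard ≤ ((G.lift s e₁ e₂).graph.edgeCut S).ncard := by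
  classical
  haveI hF : Finite (G.lift s e₁ e₂).E := G.liftE_finite s e₁ e₂
  have hlo := G.lift_cut_lower s e₁ e₂ S
  by_cases hc1 : G.other s e₁ ∈ S
  · -- e₁ crosses, e₂ does not; the new edge crosses.
    have hc2 : G.other s e₂ ∉ S := fun h => hnot ⟨hc1, h⟩
    have hneo : G.other s e₁ ≠ G.other s e₂ := fun h => hc2 (h ▸ hc1)
    have he2 : e₂ ∉ G.edgeCut S := not_mem_edgeCut_neither (inc_s_other hs2) hsS hc2
    have he1 : e₁ ∈ G.edgeCut S := mem_edgeCut_of_inc (inc_s_other hs1).symm' hc1 hsS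
    have hcuteq : G.edgeCut S = insert e₁ (G.edgeCut S \ {e₁, e₂}) := by
      ext e
      simp only [Set.mem_insert_iff, Set.mem_diff, Set.mem_singleton_iff]
      constructor
      · intro h
        by_cases h1 : e = e₁
        · exact Or.inl h1
        · refine Or.inr ⟨h, ?_⟩
          push_neg
          exact ⟨h1, fun h2 => he2 (h2 ▸ h)⟩
      · rintro (rfl | ⟨h, _⟩)
        · exact he1
        · exact h
    have hnewmem : (Sum.inr ⟨PUnit.unit, hneo⟩ : (G.lift s e₁ e₂).E)
        ∈ (G.lift s e₁ e₂).graph.edgeCut S := Or.inl ⟨hc1, hc2⟩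
    have hinsert : insert (Sum.inr ⟨PUnit.unit, hneo⟩ : (G.lift s e₁ e₂).E)
        (G.inlCut s e₁ e₂ S) ⊆ (G.lift s e₁ e₂).graph.edgeCut S := by
      intro x hx
      rcases hx with rfl | hx
      · exact hnewmem
      · exact G.inlCut_subset s e₁ e₂ S hx
    have hnotin : (Sum.inr ⟨PUnit.unit, hneo⟩ : (G.lift s e₁ e₂).E)
        ∉ G.inlCut s e₁ e₂ S := by
      rintro ⟨x, _, hx⟩
      exact Sum.inl_ne_inr hx
    calc (G.edgeCut S).ncard = (G.edgeCut S \ {e₁, e₂}).ncard + 1 := by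
          nth_rewrite 1 [hcuteq]
          rw [Set.ncard_insert_of_notMem (fun h => h.2 (Set.mem_insert _ _)) (Set.toFinite _)]
      _ = (G.inlCut s e₁ e₂ S).ncard + 1 := by rw [G.inlCut_ncard]
      _ = (insert (Sum.inr ⟨PUnit.unit, hneo⟩ : (G.lift s e₁ e₂).E)
            (G.inlCut s e₁ e₂ S)).ncard := by
          exact (Set.ncard_insert_of_notMem hnotin (Set.toFinite _)).symm
      _ ≤ _ := Set.ncard_le_ncard hinsert (Set.toFinite _)
  · by_cases hc2 : G.other s e₂ ∈ S
    · have hneo : G.other s e₁ ≠ G.other s e₂ := fun h => hc1 (h ▸ hc2)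
      have he1 : e₁ ∉ G.edgeCut S := not_mem_edgeCut_neither (inc_s_other hs1) hsS hc1
      have he2 : e₂ ∈ G.edgeCut S := mem_edgeCut_of_inc (inc_s_other hs2).symm' hc2 hsS
      have hcuteq : G.edgeCut S = insert e₂ (G.edgeCut S \ {e₁, e₂}) := by
        ext e
        simp only [Set.mem_insert_iff, Set.mem_diff, Set.mem_singleton_iff]
        constructor
        · intro h
          by_cases h2 : e = e₂
          · exact Or.inl h2
          · refine Or.inr ⟨h, ?_⟩
            push_neg
            exact ⟨fun h1 => he1 (h1 ▸ h), h2⟩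
        · rintro (rfl | ⟨h, _⟩)
          · exact he2
          · exact h
      have hnewmem : (Sum.inr ⟨PUnit.unit, hneo⟩ : (G.lift s e₁ e₂).E)
          ∈ (G.lift s e₁ e₂).graph.edgeCut S := Or.inr ⟨hc1, hc2⟩
      have hinsert : insert (Sum.inr ⟨PUnit.unit, hneo⟩ : (G.lift s e₁ e₂).E)
          (G.inlCut s e₁ e₂ S) ⊆ (G.lift s e₁ e₂).graph.edgeCut S := by
        intro x hx
        rcases hx with rfl | hx
        · exact hnewmem
        · exact G.inlCut_subset s e₁ e₂ S hx
      have hnotin : (Sum.inr ⟨PUnit.unit, hneo⟩ : (G.lift s e₁ e₂).E)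
          ∉ G.inlCut s e₁ e₂ S := by
        rintro ⟨x, _, hx⟩
        exact Sum.inl_ne_inr hx
      calc (G.edgeCut S).ncard = (G.edgeCut S \ {e₁, e₂}).ncard + 1 := by
            nth_rewrite 1 [hcuteq]
            rw [Set.ncard_insert_of_notMem (fun h => h.2 (by simp)) (Set.toFinite _)]
        _ = (G.inlCut s e₁ e₂ S).ncard + 1 := by rw [G.inlCut_ncard]
        _ = (insert (Sum.inr ⟨PUnit.unit, hneo⟩ : (G.lift s e₁ e₂).E)
              (G.inlCut s e₁ e₂ S)).ncard := by
            exact (Set.ncard_insert_of_notMem hnotin (Set.toFinite _)).symm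
        _ ≤ _ := Set.ncard_le_ncard hinsert (Set.toFinite _)
    · have he1 : e₁ ∉ G.edgeCut S := not_mem_edgeCut_neither (inc_s_other hs1) hsS hc1
      have he2 : e₂ ∉ G.edgeCut S := not_mem_edgeCut_neither (inc_s_other hs2) hsS hc2
      have hcuteq : G.edgeCut S \ {e₁, e₂} = G.edgeCut S := by
        ext e
        simp only [Set.mem_diff, Set.mem_insert_iff, Set.mem_singleton_iff]
        constructor
        · exact fun h => h.1
        · intro h
          refine ⟨h, ?_⟩
          push_neg
          exact ⟨fun h1 => he1 (h1 ▸ h), fun h2 => he2 (h2 ▸ h)⟩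
      rw [← hcuteq]
      exact hlo

end LiftCuts

end Multigraph

/-! ### Characterization of liftability -/

namespace Multigraph

variable {W F : Type u} {G : Multigraph W F}

/-- There is a witness set containing the far endpoints of both edges. -/
def BadPair (G : Multigraph W F) (s : W) (k : ℕ) (e₁ e₂ : F) : Prop :=
  ∃ X : Set W, G.other s e₁ ∈ X ∧ G.other s e₂ ∈ X ∧ G.Wit s k X

lemma BadPair.symm' {s : W} {k : ℕ} {e₁ e₂ : F} (h : G.BadPair s k e₁ e₂) :
    G.BadPair s k e₂ e₁ := by
  obtain ⟨X, h1, h2, h3⟩ := h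
  exact ⟨X, h2, h1, h3⟩

section Char

variable [Finite W] [Finite F] {s : W} {k : ℕ} {e₁ e₂ : F}

lemma not_SEC_of_badPair (hs1 : G.IncVert s e₁) (hs2 : G.IncVert s e₂) (hne : e₁ ≠ e₂)
    (hbad : G.BadPair s k e₁ e₂) : ¬ (G.lift s e₁ e₂).graph.SEdgeConnected s k := by
  intro hsec
  obtain ⟨X, h1, h2, hsX, ⟨w, hwX, hws⟩, hd⟩ := hbad
  haveI := G.liftE_finite s e₁ e₂
  have hxy : G.other s e₁ ≠ w := fun h => hwX (h ▸ h1)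
  have hpaths := hsec (G.other s e₁) w (other_ne hs1) hws hxy
  have hle := hpaths.le_ncard h1 hwX
  have hboth := G.lift_cut_both hs1 hs2 hne hsX h1 h2
  omega

lemma SEC_of_not_badPair (hconn : G.SEdgeConnected s k) (hs1 : G.IncVert s e₁)
    (hs2 : G.IncVert s e₂) (hne : e₁ ≠ e₂) (hnb : ¬ G.BadPair s k e₁ e₂) :
    (G.lift s e₁ e₂).graph.SEdgeConnected s k := by
  intro x y hxs hys hxy
  haveI := G.liftE_finite s e₁ e₂
  apply Multigraph.menger_hard (G := (G.lift s e₁ e₂).graph) hxy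
  intro S hxS hyS
  have main : ∀ T : Set W, s ∉ T → (∃ p, p ∈ T ∧ p ≠ s) → (∃ q, q ∉ T ∧ q ≠ s) →
      k ≤ ((G.lift s e₁ e₂).graph.edgeCut T).ncard := by
    intro T hsT hp hq
    obtain ⟨p, hpT, hps⟩ := hp
    obtain ⟨q, hqT, hqs⟩ := hq
    by_cases hb : G.other s e₁ ∈ T ∧ G.other s e₂ ∈ T
    · have hwit : ¬ (G.edgeCut T).ncard ≤ k + 1 :=
        fun hle => hnb ⟨T, hb.1, hb.2, hsT, ⟨q, hqT, hqs⟩, hle⟩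
      have hboth := G.lift_cut_both hs1 hs2 hne hsT hb.1 hb.2
      omega
    · have h1 := G.lift_cut_le hs1 hs2 hne hsT hb
      have h2 : k ≤ (G.edgeCut T).ncard := hconn.cut_lb hpT hqT hps hqs
      omega
  by_cases hsIn : s ∈ S
  · have := main Sᶜ (by simpa using hsIn) ⟨y, hyS, hys⟩ ⟨x, by simpa using hxS, hxs⟩
    rwa [edgeCut_compl] at this
  · exact main S hsIn ⟨x, hxS, hxs⟩ ⟨y, hyS, hys⟩

lemma badPair_of_not_SEC (hconn : G.SEdgeConnected s k) (hs1 : G.IncVert s e₁)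
    (hs2 : G.IncVert s e₂) (hne : e₁ ≠ e₂)
    (h : ¬ (G.lift s e₁ e₂).graph.SEdgeConnected s k) : G.BadPair s k e₁ e₂ := by
  haveI := G.liftE_finite s e₁ e₂
  unfold SEdgeConnected at h
  push_neg at h
  obtain ⟨x, y, hxs, hys, hxy, hnp⟩ := h
  have hcut : ∃ S : Set W, x ∈ S ∧ y ∉ S ∧ ((G.lift s e₁ e₂).graph.edgeCut S).ncard < k := by
    by_contra hno
    push_neg at hno
    exact hnp (Multigraph.menger_hard (G := (G.lift s e₁ e₂).graph) hxy
      (fun S hx hy => hno S hx hy))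
  obtain ⟨S, hxS, hyS, hlt⟩ := hcut
  have main : ∀ T : Set W, s ∉ T → (∃ p, p ∈ T ∧ p ≠ s) → (∃ q, q ∉ T ∧ q ≠ s) →
      ((G.lift s e₁ e₂).graph.edgeCut T).ncard < k → G.BadPair s k e₁ e₂ := by
    intro T hsT hp hq hlt'
    obtain ⟨p, hpT, hps⟩ := hp
    obtain ⟨q, hqT, hqs⟩ := hq
    by_cases hb : G.other s e₁ ∈ T ∧ G.other s e₂ ∈ T
    · have hboth := G.lift_cut_both hs1 hs2 hne hsT hb.1 hb.2
      exact ⟨T, hb.1, hb.2, hsT, ⟨q, hqT, hqs⟩, by omega⟩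
    · exfalso
      have h1 := G.lift_cut_le hs1 hs2 hne hsT hb
      have h2 : k ≤ (G.edgeCut T).ncard := hconn.cut_lb hpT hqT hps hqs
      omega
  by_cases hsIn : s ∈ S
  · refine main Sᶜ (by simpa using hsIn) ⟨y, hyS, hys⟩ ⟨x, by simpa using hxS, hxs⟩ ?_
    rw [edgeCut_compl]
    exact hlt
  · exact main S hsIn ⟨x, hxS, hxs⟩ ⟨y, hyS, hys⟩ hlt

lemma isLiftable_iff_not_badPair (hconn : G.SEdgeConnected s k) (hs1 : G.IncVert s e₁)
    (hs2 : G.IncVert s e₂) (hne : e₁ ≠ e₂) :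
    G.IsLiftable s k e₁ e₂ ↔ ¬ G.BadPair s k e₁ e₂ := by
  constructor
  · rintro ⟨_, _, _, hsec⟩ hbad
    exact not_SEC_of_badPair hs1 hs2 hne hbad hsec
  · intro hnb
    by_contra hnl
    refine hnb (badPair_of_not_SEC hconn hs1 hs2 hne ?_)
    intro hsec
    exact hnl ⟨hne, hs1, hs2, hsec⟩

end Char

end Multigraph

/-! ### Main theorem -/

theorem liftingGraph_completeMultipartite' {V E : Type} [Finite V] [Finite E]
    (G : Multigraph V E) (s : V) (k : ℕ) (hk : 0 < k) (hkeven : Even k)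
    (hconn : G.SEdgeConnected s k) (hdeg : Even (G.degree s)) :
    (∃ (ι : Type) (c : {e : E // G.IncVert s e} → ι),
      ∀ a b, (G.liftingGraph s k).Adj a b ↔ c a ≠ c b) ∧
    (2 ≤ G.degree s → ¬ (G.liftingGraph s k)ᶜ.Connected) := by
  classical
  haveI : Fintype V := Fintype.ofFinite V
  haveI : Fintype E := Fintype.ofFinite E
  let r : {e : E // G.IncVert s e} → {e : E // G.IncVert s e} → Prop :=
    fun a b => a = b ∨ G.BadPair s k a.1 b.1
  have hrrefl : ∀ a, r a a := fun a => Or.inl rfl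
  have hrsymm : ∀ {a b}, r a b → r b a := by
    rintro a b (rfl | h)
    · exact Or.inl rfl
    · exact Or.inr h.symm'
  have hrtrans : ∀ {a b c}, r a b → r b c → r a c := by
    rintro a b c (rfl | hab) h
    · exact h
    rcases h with rfl | hbc
    · exact Or.inr hab
    obtain ⟨X, hX1, hX2, hXw⟩ := hab
    obtain ⟨Y, hY1, hY2, hYw⟩ := hbc
    have hU := G.wit_union hconn hkeven hdeg hXw hYw b.2 hX2 hY1
    exact Or.inr ⟨X ∪ Y, Set.mem_union_left _ hX1, Set.mem_union_right _ hY2, hU⟩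
  have hAdj : ∀ a b : {e : E // G.IncVert s e},
      (G.liftingGraph s k).Adj a b ↔ ¬ r a b := by
    intro a b
    unfold Multigraph.liftingGraph
    rw [SimpleGraph.fromRel_adj]
    constructor
    · rintro ⟨hne, h | h⟩
      · rintro (rfl | hbad)
        · exact hne rfl
        · exact ((G.isLiftable_iff_not_badPair hconn a.2 b.2
            (fun hh => hne (Subtype.ext hh))).1 h) hbad
      · rintro (rfl | hbad)
        · exact hne rfl
        · exact ((G.isLiftable_iff_not_badPair hconn b.2 a.2
            (fun hh => hne (Subtype.ext hh.symm))).1 h) hbad.symm'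
    · intro hnr
      have hne : a ≠ b := fun h => hnr (Or.inl h)
      have hnbad : ¬ G.BadPair s k a.1 b.1 := fun h => hnr (Or.inr h)
      exact ⟨hne, Or.inl ((G.isLiftable_iff_not_badPair hconn a.2 b.2
        (fun hh => hne (Subtype.ext hh))).2 hnbad)⟩
  constructor
  · -- complete multipartite
    refine ⟨Quotient ⟨r, hrrefl, fun h => hrsymm h, fun h h' => hrtrans h h'⟩,
      Quotient.mk _, fun a b => ?_⟩
    rw [hAdj]
    constructor
    · exact fun hnr heq => hnr (Quotient.exact heq)
    · exact fun hne hr => hne (Quotient.sound hr)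
  · -- complement disconnected
    intro hdeg2 hcon
    have hexists : ∃ a b : {e : E // G.IncVert s e}, (G.liftingGraph s k).Adj a b := by
      by_contra hno
      push_neg at hno
      have hall : ∀ a b : {e : E // G.IncVert s e}, a ≠ b → G.BadPair s k a.1 b.1 := by
        intro a b hne
        have h := hno a b
        rw [hAdj] at h
        rcases not_not.1 h with rfl | hbad
        · exact absurd rfl hne
        · exact hbad
      have h12 : 1 < ({e : E | G.IncVert s e}).ncard := by
        have hdd : G.degree s = ({e : E | G.IncVert s e}).ncard := rfl
        omega
      obtain ⟨e, f, he, hf, hef⟩ := (Set.one_lt_ncard_iff (Set.toFinite _)).1 h12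
      let a0 : {e : E // G.IncVert s e} := ⟨e, he⟩
      let b0 : {e : E // G.IncVert s e} := ⟨f, hf⟩
      have ha0b0 : a0 ≠ b0 := fun h => hef (congrArg Subtype.val h)
      have hacc : ∀ T : Finset {e : E // G.IncVert s e},
          ∃ Z : Set V, G.Wit s k Z ∧ G.other s a0.1 ∈ Z ∧
            ∀ g : {e : E // G.IncVert s e}, g ∈ T → G.other s g.1 ∈ Z := by
        intro T
        induction T using Finset.induction_on with
        | empty =>
          obtain ⟨X, h1, h2, hw⟩ := hall a0 b0 ha0b0
          exact ⟨X, hw, h1, fun g hg => absurd hg (Finset.notMem_empty g)⟩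
        | @insert g T hgT ih =>
          obtain ⟨Z, hZw, hZa, hZall⟩ := ih
          by_cases hg : g = a0
          · subst hg
            refine ⟨Z, hZw, hZa, fun g' hg' => ?_⟩
            rcases Finset.mem_insert.1 hg' with rfl | h
            · exact hZa
            · exact hZall g' h
          · obtain ⟨Y, hY1, hY2, hYw⟩ := hall a0 g (fun h => hg h.symm)
            have hU := G.wit_union hconn hkeven hdeg hZw hYw a0.2 hZa hY1
            refine ⟨Z ∪ Y, hU, Set.mem_union_left _ hZa, fun g' hg' => ?_⟩
            rcases Finset.mem_insert.1 hg' with rfl | h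
            · exact Set.mem_union_right _ hY2
            · exact Set.mem_union_left _ (hZall g' h)
      obtain ⟨Z, ⟨hsZ, ⟨w, hwZ, hws⟩, hdZ⟩, hZa, hZall⟩ := hacc Finset.univ
      have hallZ : ∀ e', G.IncVert s e' → G.other s e' ∈ Z :=
        fun e' h' => hZall ⟨e', h'⟩ (Finset.mem_univ _)
      have hsub1 : G.edgeCut (Z ∪ {s}) ⊆ G.edgeCut Z := by
        intro e' h'
        rcases h' with ⟨h1, h2⟩ | ⟨h1, h2⟩
        · rcases (Set.mem_union _ _ _).1 h1 with h1' | h1'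
          · exact Or.inl ⟨h1', fun hh => h2 (Set.mem_union_left _ hh)⟩
          · exfalso
            have hfs : G.fst e' = s := h1'
            have hiv : G.IncVert s e' := Or.inl hfs
            have hsnd : G.other s e' = G.snd e' := by
              unfold Multigraph.other
              rw [if_pos hfs]
            exact h2 (Set.mem_union_left _ (hsnd ▸ hallZ e' hiv))
        · rcases (Set.mem_union _ _ _).1 h2 with h2' | h2'
          · exact Or.inr ⟨fun hh => h1 (Set.mem_union_left _ hh), h2'⟩
          · exfalso
            have hss : G.snd e' = s := h2'
            have hiv : G.IncVert s e' := Or.inr hss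
            have hfst : G.other s e' = G.fst e' := by
              unfold Multigraph.other
              rw [if_neg]
              intro hh
              exact G.loopless e' (hh.trans hss.symm)
            exact h1 (Set.mem_union_left _ (hfst ▸ hallZ e' hiv))
      have hsub2 : {e' : E | G.IncVert s e'} ⊆ G.edgeCut Z := by
        intro e' h'
        exact Multigraph.mem_edgeCut_of_inc (Multigraph.inc_s_other h').symm' (hallZ e' h') hsZ
      have hdisj : Disjoint (G.edgeCut (Z ∪ {s})) {e' : E | G.IncVert s e'} := by
        rw [Set.disjoint_left]
        intro e' h1 h2
        exact Multigraph.not_mem_edgeCut_both (Multigraph.inc_s_other h2)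
          (Set.mem_union_right _ (Set.mem_singleton s)) (Set.mem_union_left _ (hallZ e' h2)) h1
      have hk2 : k ≤ (G.edgeCut (Z ∪ {s})).ncard := by
        refine hconn.cut_lb (a := G.other s a0.1) (b := w)
          (Set.mem_union_left _ hZa) ?_ (Multigraph.other_ne a0.2) hws
        intro h
        rcases (Set.mem_union _ _ _).1 h with h | h
        · exact hwZ h
        · exact hws h
      have hbig : (G.edgeCut (Z ∪ {s})).ncard + G.degree s ≤ (G.edgeCut Z).ncard := by
        have hdd : G.degree s = ({e' : E | G.IncVert s e'}).ncard := rfl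
        rw [hdd, ← Set.ncard_union_eq hdisj (Set.toFinite _) (Set.toFinite _)]
        exact Set.ncard_le_ncard (Set.union_subset hsub1 hsub2) (Set.toFinite _)
      omega
    obtain ⟨a, b, hab⟩ := hexists
    have hreach : ∀ p q : {e : E // G.IncVert s e},
        (G.liftingGraph s k)ᶜ.Reachable p q → r p q := by
      intro p q hpq
      obtain ⟨wpq⟩ := hpq
      induction wpq with
      | nil => exact hrrefl _
      | cons h w ih =>
        rename_i u v' z
        have hr1 : r u v' := by
          rw [SimpleGraph.compl_adj] at h
          have h2 := h.2
          rw [hAdj] at h2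
          exact not_not.1 h2
        exact hrtrans hr1 ih
    have hr := hreach a b (hcon.preconnected a b)
    rw [hAdj] at hab
    exact hab hr

/-- Jordán; Ok–Richter–Thomassen. Let `k` be an even positive integer
and let `G` be a finite `(s,k)`-edge-connected graph in which `deg(s)` is even. Then the
lifting graph `L(G, s, k)` is a complete multipartite graph; in particular its complement
is disconnected (provided `deg(s) ≥ 2`). -/
theorem liftingGraph_completeMultipartite {V E : Type} [Finite V] [Finite E]
    (G : Multigraph V E) (s : V) (k : ℕ) (hk : 0 < k) (hkeven : Even k)
    (hconn : G.SEdgeConnected s k) (hdeg : Even (G.degree s)) :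
    (∃ (ι : Type) (c : {e : E // G.IncVert s e} → ι),
      ∀ a b, (G.liftingGraph s k).Adj a b ↔ c a ≠ c b) ∧
    (2 ≤ G.degree s → ¬ (G.liftingGraph s k)ᶜ.Connected) := by
  exact liftingGraph_completeMultipartite' G s k hk hkeven hconn hdeg
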